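/- arXiv:2307.03964 — 7 statements merged into one kernel-verified Lean document; each statement's English description precedes it below -/
import Mathlib

section
/- Let G be a 2-connected graph of order n ≥ 4 containing two adjacent vertices u and v each of degree 2. Then rvd(G) ≤ rvd(G/uv), where G/uv is the graph obtained from G by contracting the edge uv. -/
open SimpleGraph

variable {V : Type*}

/-- `c` is a rainbow vertex-disconnection coloring of `G`: for any two distinct vertices
`x, y` there is a set `S` avoiding `x` and `y` that meets every `x`-`y` walk of `G - xy`
(i.e. `x` and `y` lie in different components of `(G - xy) - S`), and which is rainbow
(when `x, y` nonadjacent), resp. such that `S + x` or `S + y` is rainbow (when adjacent). -/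
def IsRVDColoring {α : Type*} (G : SimpleGraph V) (c : V → α) : Prop :=
  ∀ x y : V, x ≠ y → ∃ S : Set V,
    x ∉ S ∧ y ∉ S ∧
    (∀ p : (G.deleteEdges {s(x, y)}).Walk x y, ∃ v ∈ p.support, v ∈ S) ∧
    (G.Adj x y → Set.InjOn c (insert x S) ∨ Set.InjOn c (insert y S)) ∧
    (¬ G.Adj x y → Set.InjOn c S)

/-- The rainbow vertex-disconnection number: the minimum number of colors of a
rainbow vertex-disconnection coloring. -/
noncomputable def rvd (G : SimpleGraph V) : ℕ :=
  sInf {n | ∃ c : V → Fin n, IsRVDColoring G c}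

/-- `G` contains `K₄` as a minor (via a minor model with four branch sets). -/
def HasK4Minor (G : SimpleGraph V) : Prop :=
  ∃ B : Fin 4 → Set V,
    (∀ i, (B i).Nonempty) ∧
    (∀ i, (G.induce (B i)).Connected) ∧
    (∀ i j, i ≠ j → Disjoint (B i) (B j)) ∧
    (∀ i j, i ≠ j → ∃ a ∈ B i, ∃ b ∈ B j, G.Adj a b)

/-- A finite graph is 2-connected if it has at least 3 vertices and deleting any
single vertex leaves a connected graph. -/
def TwoConnected [Fintype V] (G : SimpleGraph V) : Prop :=
  3 ≤ Fintype.card V ∧ ∀ w : V, (G.induce ({w}ᶜ : Set V)).Connected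

/-- Contraction of the edge `uv`: delete `v` and join `u` to the former neighbors of `v`. -/
def contractEdge (G : SimpleGraph V) (u v : V) : SimpleGraph {x : V // x ≠ v} where
  Adj a b := a ≠ b ∧ (G.Adj a b ∨ ((a : V) = u ∧ G.Adj v b) ∨ ((b : V) = u ∧ G.Adj v a))
  symm := by
    constructor
    rintro a b ⟨h1, h2⟩
    refine ⟨h1.symm, ?_⟩
    rcases h2 with h | h | h
    · exact Or.inl h.symm
    · exact Or.inr (Or.inr h)
    · exact Or.inr (Or.inl h)
  loopless := by constructor; rintro a ⟨h, _⟩; exact h rfl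

/-- `T_G(u)`: vertices `x` of degree at least 3 that are adjacent to `u` or joined
to `u` through a `2`-vertex. -/
def Tset [Fintype V] (G : SimpleGraph V) [DecidableRel G.Adj] (u : V) : Set V :=
  {x | 3 ≤ G.degree x ∧ (G.Adj u x ∨ ∃ z : V, G.degree z = 2 ∧ G.Adj u z ∧ G.Adj z x)}

/-- `t_G(u) = |T_G(u)|`. -/
noncomputable def tnum [Fintype V] (G : SimpleGraph V) [DecidableRel G.Adj] (u : V) : ℕ :=
  (Tset G u).ncard

/-- An injective coloring: vertices with a common neighbor get distinct colors. -/
def IsInjectiveColoring {α : Type*} (G : SimpleGraph V) (c : V → α) : Prop :=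
  ∀ u v w : V, G.Adj u w → G.Adj v w → u ≠ v → c u ≠ c v

/-- The injective chromatic number. -/
noncomputable def injChromaticNumber (G : SimpleGraph V) : ℕ :=
  sInf {n | ∃ c : V → Fin n, IsInjectiveColoring G c}

/-- A graph has no cut vertex if deleting any vertex leaves a preconnected graph. -/
def HasNoCutVertex {W : Type*} (H : SimpleGraph W) : Prop :=
  ∀ w : W, (H.induce ({w}ᶜ : Set W)).Preconnected

/-- A block of `G`: a maximal connected subgraph of `G` without a cut vertex. -/
def IsBlock (G : SimpleGraph V) (H : G.Subgraph) : Prop :=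
  H.coe.Connected ∧ HasNoCutVertex H.coe ∧
    ∀ H' : G.Subgraph, H ≤ H' → H'.coe.Connected → HasNoCutVertex H'.coe → H' = H

/-- `c` is a `k`-fold coloring: each vertex receives `k` colors, adjacent vertices get
disjoint color sets. -/
def IsKFoldColoring {n : ℕ} (G : SimpleGraph V) (k : ℕ) (c : V → Finset (Fin n)) : Prop :=
  (∀ v, (c v).card = k) ∧ ∀ u v, G.Adj u v → Disjoint (c u) (c v)

/-- The `k`-fold chromatic number `χ_k(G)`. -/
noncomputable def kfoldChromaticNumber (G : SimpleGraph V) (k : ℕ) : ℕ :=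
  sInf {n | ∃ c : V → Finset (Fin n), IsKFoldColoring G k c}

/-- The fractional chromatic number `χ_f(G) = inf_k χ_k(G)/k`. -/
noncomputable def fracChromaticNumber (G : SimpleGraph V) : ℝ :=
  ⨅ k : {k : ℕ // 0 < k}, (kfoldChromaticNumber G k : ℝ) / (k : ℕ)

/-- The chromatic number as a natural number. -/
noncomputable def natChromaticNumber (G : SimpleGraph V) : ℕ :=
  sInf {n | G.Colorable n}

/-- The independence number `α(G)`. -/
noncomputable def indepNumber (G : SimpleGraph V) : ℕ :=
  sSup {n | ∃ s : Set V, (∀ u ∈ s, ∀ v ∈ s, ¬ G.Adj u v) ∧ s.ncard = n}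

/-- The bipartite graph `G̃` from the reduction: original vertices `V`, vertices
`s_{uv}, s'_{uv}` (type `↥G.edgeSet × Fin 2`, left summand) and `t_{uv}, t'_{uv}`
(right summand); each of `s_{uv}, s'_{uv}` is joined to `u` and `v`, and all
edges between `V_s` and `V_t` are present. -/
def tildeBip (G : SimpleGraph V) :
    SimpleGraph (V ⊕ ((↥G.edgeSet × Fin 2) ⊕ (↥G.edgeSet × Fin 2))) :=
  SimpleGraph.fromRel fun x y =>
    (∃ (a : V) (e : ↥G.edgeSet) (i : Fin 2),
        x = Sum.inl a ∧ y = Sum.inr (Sum.inl (e, i)) ∧ a ∈ (e : Sym2 V)) ∨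
    (∃ p q, x = Sum.inr (Sum.inl p) ∧ y = Sum.inr (Sum.inr q))

/-- The split graph `G̃` from the reduction: original vertices `V` and a clique on
`V_s = {s_{uv}, s'_{uv}, s''_{uv}}`, each of the three joined to `u` and `v`. -/
def tildeSplit (G : SimpleGraph V) : SimpleGraph (V ⊕ (↥G.edgeSet × Fin 3)) :=
  SimpleGraph.fromRel fun x y =>
    (∃ (a : V) (e : ↥G.edgeSet) (i : Fin 3),
        x = Sum.inl a ∧ y = Sum.inr (e, i) ∧ a ∈ (e : Sym2 V)) ∨
    (∃ p q, x = Sum.inr p ∧ y = Sum.inr q)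

/-- The graph `H`: `k` copies of `V` together with `V_s` and `V_t` as in `tildeBip`. -/
def HBip (G : SimpleGraph V) (k : ℕ) :
    SimpleGraph ((V × Fin k) ⊕ ((↥G.edgeSet × Fin 2) ⊕ (↥G.edgeSet × Fin 2))) :=
  SimpleGraph.fromRel fun x y =>
    (∃ (a : V) (j : Fin k) (e : ↥G.edgeSet) (i : Fin 2),
        x = Sum.inl (a, j) ∧ y = Sum.inr (Sum.inl (e, i)) ∧ a ∈ (e : Sym2 V)) ∨
    (∃ p q, x = Sum.inr (Sum.inl p) ∧ y = Sum.inr (Sum.inr q))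

/-- The graph `H`: `k` copies of `V` together with the clique `V_s` as in `tildeSplit`. -/
def HSplit (G : SimpleGraph V) (k : ℕ) :
    SimpleGraph ((V × Fin k) ⊕ (↥G.edgeSet × Fin 3)) :=
  SimpleGraph.fromRel fun x y =>
    (∃ (a : V) (j : Fin k) (e : ↥G.edgeSet) (i : Fin 3),
        x = Sum.inl (a, j) ∧ y = Sum.inr (e, i) ∧ a ∈ (e : Sym2 V)) ∨
    (∃ p q, x = Sum.inr p ∧ y = Sum.inr q)


private lemma walk_decomp' {P : SimpleGraph V} {x y : V} (p : P.Walk x y) (h : x ≠ y) :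
    ∃ (w : V) (_ : P.Adj x w) (q : P.Walk w y), p.support = x :: q.support := by
  cases p with
  | nil => exact absurd rfl h
  | cons h q => exact ⟨_, h, q, Walk.support_cons _ _⟩

private lemma walk_proj' {W : Type*} {P : SimpleGraph V} {Q : SimpleGraph W} (f : V → W)
    (K : Set V)
    (hf : ∀ s t, P.Adj s t → s ∉ K → t ∉ K → Q.Adj (f s) (f t) ∨ f s = f t) :
    ∀ {x y : V} (p : P.Walk x y), (∀ z ∈ p.support, z ∉ K) →
      ∃ q : Q.Walk (f x) (f y), ∀ w ∈ q.support, ∃ z ∈ p.support, f z = w := by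
  intro x y p
  induction p with
  | nil =>
    intro _
    exact ⟨.nil, by simp⟩
  | @cons x w y h p ih =>
    intro hK
    have hxK : x ∉ K := hK x (by simp [Walk.support_cons])
    have hwK : w ∉ K := hK w (by simp [Walk.support_cons, Walk.start_mem_support])
    have hK' : ∀ z ∈ p.support, z ∉ K := fun z hz => hK z (by simp [Walk.support_cons, hz])
    obtain ⟨q, hq⟩ := ih hK'
    rcases hf _ _ h hxK hwK with h' | h'
    · refine ⟨.cons h' q, ?_⟩
      intro z hz
      rw [Walk.support_cons] at hz
      rcases List.mem_cons.1 hz with rfl | hz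
      · exact ⟨x, by simp [Walk.support_cons], rfl⟩
      · obtain ⟨z', hz', hz2⟩ := hq z hz
        exact ⟨z', by simp [Walk.support_cons, hz'], hz2⟩
    · refine ⟨q.copy h'.symm rfl, ?_⟩
      intro z hz
      rw [Walk.support_copy] at hz
      obtain ⟨z', hz', hz2⟩ := hq z hz
      exact ⟨z', by simp [Walk.support_cons, hz'], hz2⟩

private lemma walk_avoid' {P : SimpleGraph V} (o kk e : V)
    (ho : ∀ z, P.Adj o z → z = kk ∨ z = e) :
    ∀ (n : ℕ) (x y : V), x ≠ o → y ≠ o → ∀ (p : P.Walk x y), p.length ≤ n →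
      kk ∉ p.support → ∃ q : P.Walk x y, o ∉ q.support ∧ ∀ z ∈ q.support, z ∈ p.support := by
  intro n
  induction n with
  | zero =>
    intro x y hx hy p hl _
    cases p with
    | nil => exact ⟨.nil, by simp [Ne.symm hx], by simp⟩
    | cons h q => simp [Walk.length_cons] at hl
  | succ n ih =>
    intro x y hx hy p hl hk
    cases p with
    | nil => exact ⟨.nil, by simp [Ne.symm hx], by simp⟩
    | @cons _ w _ h p₁ =>
      by_cases hw : w = o
      · subst hw
        -- h : P.Adj x o
        have hxe : x = e := by
          rcases ho x h.symm with h1 | h1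
          · exact absurd (h1 ▸ Walk.start_mem_support _) hk
          · exact h1
        cases p₁ with
        | nil => exact absurd rfl hy
        | @cons _ w₂ _ h₂ p₂ =>
          have hw₂ : w₂ = e := by
            rcases ho w₂ h₂ with h1 | h1
            · exfalso
              apply hk
              simp only [Walk.support_cons, List.mem_cons]
              exact Or.inr (Or.inr (h1 ▸ p₂.start_mem_support))
            · exact h1
          have hw₂x : w₂ = x := by rw [hw₂, hxe]
          have hlen : (p₂.copy hw₂x rfl).length ≤ n := by
            have := Walk.length_copy p₂ hw₂x rfl
            simp only [Walk.length_cons] at hl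
            omega
          have hksub : kk ∉ (p₂.copy hw₂x rfl).support := by
            rw [Walk.support_copy]
            intro hmem
            exact hk (by simp [Walk.support_cons, hmem])
          obtain ⟨q, hq1, hq2⟩ := ih x y hx hy (p₂.copy hw₂x rfl) hlen hksub
          refine ⟨q, hq1, ?_⟩
          intro z hz
          have := hq2 z hz
          rw [Walk.support_copy] at this
          simp [Walk.support_cons, this]
      · have hlen : p₁.length ≤ n := by
          simp only [Walk.length_cons] at hl; omega
        have hksub : kk ∉ p₁.support := fun hmem => hk (by simp [Walk.support_cons, hmem])
        obtain ⟨q, hq1, hq2⟩ := ih w y hw hy p₁ hlen hksub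
        refine ⟨.cons h q, ?_, ?_⟩
        · rw [Walk.support_cons]
          intro hmem
          rcases List.mem_cons.1 hmem with h1 | h1
          · exact hx h1.symm
          · exact hq1 h1
        · intro z hz
          rw [Walk.support_cons] at hz
          rcases List.mem_cons.1 hz with rfl | hz
          · simp [Walk.support_cons]
          · simp [Walk.support_cons, hq2 z hz]

private lemma walk_trapped' {P : SimpleGraph V} (u v e : V)
    (hu : ∀ z, P.Adj u z → z = v ∨ z = e) (hv : ∀ z, P.Adj v z → z = u ∨ z = e) :
    ∀ {x y : V} (p : P.Walk x y), (x = u ∨ x = v) → ¬(y = u ∨ y = v) → e ∈ p.support := by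
  intro x y p
  induction p with
  | nil => intro h1 h2; exact absurd h1 h2
  | @cons x w y h p ih =>
    intro hx hy
    have hw : w = u ∨ w = v ∨ w = e := by
      rcases hx with rfl | rfl
      · rcases hu w h with h1 | h1
        · exact Or.inr (Or.inl h1)
        · exact Or.inr (Or.inr h1)
      · rcases hv w h with h1 | h1
        · exact Or.inl h1
        · exact Or.inr (Or.inr h1)
    rcases hw with h1 | h1 | h1
    · rw [Walk.support_cons]
      exact List.mem_cons_of_mem _ (ih (Or.inl h1) hy)
    · rw [Walk.support_cons]
      exact List.mem_cons_of_mem _ (ih (Or.inr h1) hy)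
    · rw [Walk.support_cons]
      exact List.mem_cons_of_mem _ (h1 ▸ p.start_mem_support)

private lemma injOn_pair' {α : Type*} {c : V → α} {x y : V} (h : c x ≠ c y) :
    Set.InjOn c {x, y} := by
  intro z₁ h₁ z₂ h₂ hc
  simp only [Set.mem_insert_iff, Set.mem_singleton_iff] at h₁ h₂
  rcases h₁ with rfl | rfl <;> rcases h₂ with rfl | rfl
  · rfl
  · exact absurd hc h
  · exact absurd hc.symm h
  · rfl

private lemma isRVD_of_injective' {α : Type*} (G : SimpleGraph V) (c : V → α)
    (hc : Function.Injective c) : IsRVDColoring G c := by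
  intro x y hxy
  refine ⟨({x, y}ᶜ : Set V), by simp, by simp, ?_, fun _ => Or.inl hc.injOn,
    fun _ => hc.injOn⟩
  intro p
  obtain ⟨w, hadj, q, hsupp⟩ := walk_decomp' p hxy
  rw [deleteEdges_adj] at hadj
  refine ⟨w, by simp [hsupp, Walk.start_mem_support], ?_⟩
  simp only [Set.mem_compl_iff, Set.mem_insert_iff, Set.mem_singleton_iff]
  push_neg
  refine ⟨hadj.1.ne', fun h => ?_⟩
  exact hadj.2 (by simp [h])

/-- If `G` is a 2-connected graph of order `n ≥ 4` with two adjacent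
vertices `u, v` of degree 2, then `rvd(G) ≤ rvd(G/uv)`. -/
theorem rvd_le_rvd_contract [Fintype V] [DecidableEq V] (G : SimpleGraph V)
    [DecidableRel G.Adj] (hn : 4 ≤ Fintype.card V) (h2c : TwoConnected G)
    (u v : V) (huv : G.Adj u v) (hdu : G.degree u = 2) (hdv : G.degree v = 2) :
    rvd G ≤ rvd (contractEdge G u v) := by
  classical
  have huv_ne : u ≠ v := huv.ne
  obtain ⟨a, hav, hau, hadj_ua, hnbru⟩ :
      ∃ a : V, a ≠ v ∧ a ≠ u ∧ G.Adj u a ∧ ∀ z, G.Adj u z → z = v ∨ z = a := by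
    have hmem : v ∈ G.neighborFinset u := (G.mem_neighborFinset u v).2 huv
    have hcard : ((G.neighborFinset u).erase v).card = 1 := by
      rw [Finset.card_erase_of_mem hmem, G.card_neighborFinset_eq_degree, hdu]
    obtain ⟨a, ha⟩ := Finset.card_eq_one.1 hcard
    have hmem_a : a ∈ (G.neighborFinset u).erase v := ha ▸ Finset.mem_singleton_self a
    obtain ⟨hane, hamem⟩ := Finset.mem_erase.1 hmem_a
    have hadj : G.Adj u a := (G.mem_neighborFinset u a).1 hamem
    refine ⟨a, hane, hadj.ne', hadj, ?_⟩
    intro z hz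
    by_cases hzv : z = v
    · exact Or.inl hzv
    · right
      have hz2 : z ∈ (G.neighborFinset u).erase v :=
        Finset.mem_erase.2 ⟨hzv, (G.mem_neighborFinset u z).2 hz⟩
      rw [ha] at hz2
      exact Finset.mem_singleton.1 hz2
  obtain ⟨b, hbu, hbv, hadj_vb, hnbrv⟩ :
      ∃ b : V, b ≠ u ∧ b ≠ v ∧ G.Adj v b ∧ ∀ z, G.Adj v z → z = u ∨ z = b := by
    have hmem : u ∈ G.neighborFinset v := (G.mem_neighborFinset v u).2 huv.symm
    have hcard : ((G.neighborFinset v).erase u).card = 1 := by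
      rw [Finset.card_erase_of_mem hmem, G.card_neighborFinset_eq_degree, hdv]
    obtain ⟨b, hb⟩ := Finset.card_eq_one.1 hcard
    have hmem_b : b ∈ (G.neighborFinset v).erase u := hb ▸ Finset.mem_singleton_self b
    obtain ⟨hbne, hbmem⟩ := Finset.mem_erase.1 hmem_b
    have hadj : G.Adj v b := (G.mem_neighborFinset v b).1 hbmem
    refine ⟨b, hbne, hadj.ne', hadj, ?_⟩
    intro z hz
    by_cases hzu : z = u
    · exact Or.inl hzu
    · right
      have hz2 : z ∈ (G.neighborFinset v).erase u :=
        Finset.mem_erase.2 ⟨hzu, (G.mem_neighborFinset v z).2 hz⟩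
      rw [hb] at hz2
      exact Finset.mem_singleton.1 hz2
  have hab : a ≠ b := by
    intro h
    have hw : ∃ w : V, w ≠ u ∧ w ≠ v ∧ w ≠ a := by
      by_contra hcon
      push_neg at hcon
      have hsub : (Finset.univ : Finset V) ⊆ {u, v, a} := by
        intro w _
        simp only [Finset.mem_insert, Finset.mem_singleton]
        by_cases h1 : w = u
        · exact Or.inl h1
        · by_cases h2 : w = v
          · exact Or.inr (Or.inl h2)
          · exact Or.inr (Or.inr (hcon w h1 h2))
      have h3 : Fintype.card V ≤ ({u, v, a} : Finset V).card := by
        rw [← Finset.card_univ]; exact Finset.card_le_card hsub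
      have h4 : ({u, v, a} : Finset V).card ≤ 3 := by
        apply le_trans (Finset.card_insert_le _ _)
        have := Finset.card_insert_le v ({a} : Finset V)
        simp only [Finset.card_singleton] at this ⊢
        omega
      omega
    obtain ⟨w, hwu, hwv, hwa⟩ := hw
    have hconn := (h2c.2 a).preconnected
    have hreach := hconn ⟨u, (Ne.symm hau : u ≠ a)⟩ ⟨w, hwa⟩
    obtain ⟨p0⟩ := hreach
    obtain ⟨p1, hp1⟩ := walk_proj' (Subtype.val : ({a}ᶜ : Set V) → V) ∅
      (fun s t hst _ _ => Or.inl (by simpa using hst)) p0 (by simp)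
    have hp1a : ∀ z ∈ p1.support, z ≠ a := by
      intro z hz
      obtain ⟨z', _, rfl⟩ := hp1 z hz
      exact z'.2
    have hnbrv' : ∀ z, G.Adj v z → z = u ∨ z = a := by
      intro z hz
      rcases hnbrv z hz with h1 | h1
      · exact Or.inl h1
      · exact Or.inr (h1.trans h.symm)
    have hmem := walk_trapped' u v a hnbru hnbrv' p1 (Or.inl rfl)
      (by rintro (h1 | h1); exacts [hwu h1, hwv h1])
    exact hp1a a hmem rfl
  -- the contraction graph and an optimal coloring of it
  set H := contractEdge G u v with hHdef
  have hSne : {n | ∃ c : {x : V // x ≠ v} → Fin n, IsRVDColoring H c}.Nonempty :=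
    ⟨Fintype.card {x : V // x ≠ v}, Fintype.equivFin _,
      isRVD_of_injective' H _ (Fintype.equivFin _).injective⟩
  set n₀ := rvd H with hn₀
  obtain ⟨c', hc'⟩ : ∃ c : {x : V // x ≠ v} → Fin n₀, IsRVDColoring H c :=
    Nat.sInf_mem hSne
  -- distinguished vertices of the contraction
  set u' : {x : V // x ≠ v} := ⟨u, huv_ne⟩ with hu'def
  set a' : {x : V // x ≠ v} := ⟨a, hav⟩ with ha'def
  set b' : {x : V // x ≠ v} := ⟨b, hbv⟩ with hb'def
  have hu'a' : u' ≠ a' := fun h => hau (congrArg Subtype.val h).symm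
  have hu'b' : u' ≠ b' := fun h => hbu (congrArg Subtype.val h).symm
  have ha'b' : a' ≠ b' := fun h => hab (congrArg Subtype.val h)
  have hHua : H.Adj u' a' := ⟨hu'a', Or.inl hadj_ua⟩
  have hHub : H.Adj u' b' := ⟨hu'b', Or.inr (Or.inl ⟨rfl, hadj_vb⟩)⟩
  -- the projection map
  set f : V → {x : V // x ≠ v} :=
    fun z => if hz : z = v then u' else if z = u then u' else ⟨z, hz⟩ with hfdef
  have hfv : f v = u' := by simp [hfdef]
  have hfu : f u = u' := by simp [hfdef, huv_ne]
  have hfz : ∀ (z : V) (h1 : z ≠ v), z ≠ u → f z = ⟨z, h1⟩ := by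
    intro z h1 h2
    simp [hfdef, h1, h2]
  have hfval : ∀ (z : V), z ≠ v → (f z : V) = z := by
    intro z h1
    by_cases h2 : z = u
    · subst h2; rw [hfu]
    · rw [hfz z h1 h2]
  have hfuv : ∀ z : V, f z = u' → z = u ∨ z = v := by
    intro z hz
    by_cases h1 : z = v
    · exact Or.inr h1
    · left
      have := congrArg Subtype.val hz
      rwa [hfval z h1] at this
  have hfback : ∀ (z w₀ : V) (h : w₀ ≠ v), w₀ ≠ u → f z = ⟨w₀, h⟩ → z = w₀ := by
    intro z w₀ h hw₀u hz
    by_cases h1 : z = v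
    · subst h1
      rw [hfv] at hz
      have h2 : u = w₀ := congrArg Subtype.val hz
      exact absurd h2.symm hw₀u
    · have := congrArg Subtype.val hz
      rwa [hfval z h1] at this
  -- at least two colors
  have h2 : 2 ≤ n₀ := by
    by_contra hlt
    push_neg at hlt
    have h01 : n₀ = 0 ∨ n₀ = 1 := by omega
    rcases h01 with h0 | h1
    · exact (h0 ▸ c' u').elim0
    · -- all colors are equal
      have hcc : ∀ z₁ z₂ : {x : V // x ≠ v}, c' z₁ = c' z₂ := by
        intro z₁ z₂
        have : Subsingleton (Fin n₀) := by rw [h1]; infer_instance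
        exact Subsingleton.elim _ _
      obtain ⟨S', hu'S', ha'S', hcut', hadj', _⟩ := hc' u' a' hu'a'
      have hS'empty : ∀ w ∈ S', False := by
        intro w hw
        have hwu' : w ≠ u' := fun h => hu'S' (h ▸ hw)
        have hwa' : w ≠ a' := fun h => ha'S' (h ▸ hw)
        rcases hadj' hHua with hI | hI
        · exact hwu' (hI (Set.mem_insert_of_mem _ hw) (Set.mem_insert _ _) (hcc _ _))
        · exact hwa' (hI (Set.mem_insert_of_mem _ hw) (Set.mem_insert _ _) (hcc _ _))
      -- construct a walk from u' to a' in H minus the edge u'a'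
      have hconn := (h2c.2 u).preconnected
      obtain ⟨p0⟩ := hconn ⟨b, hbu⟩ ⟨a, hau⟩
      obtain ⟨p1, hp1⟩ := walk_proj' (Subtype.val : ({u}ᶜ : Set V) → V) ∅
        (fun s t hst _ _ => Or.inl (by simpa using hst)) p0 (by simp)
      have hp1u : u ∉ p1.support := by
        intro hmem
        obtain ⟨z', _, hz'⟩ := hp1 u hmem
        exact z'.2 hz'
      obtain ⟨q1, hq1v, hq1s⟩ := walk_avoid' v u b hnbrv p1.length b a hbv hav p1
        le_rfl hp1u
      have hq1u : u ∉ q1.support := fun hmem => hp1u (hq1s u hmem)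
      -- project into H minus edge u'a'
      have hfadj : ∀ s t : V, G.Adj s t → s ∉ ({u, v} : Set V) → t ∉ ({u, v} : Set V) →
          (H.deleteEdges {s(u', a')}).Adj (f s) (f t) ∨ f s = f t := by
        intro s t hst hs ht
        simp only [Set.mem_insert_iff, Set.mem_singleton_iff, not_or] at hs ht
        left
        rw [deleteEdges_adj]
        constructor
        · refine ⟨?_, Or.inl ?_⟩
          · intro hfeq
            have := congrArg Subtype.val hfeq
            rw [hfval s hs.2, hfval t ht.2] at this
            exact hst.ne this
          · rw [hfval s hs.2, hfval t ht.2]; exact hst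
        · intro hmem
          rw [Set.mem_singleton_iff, Sym2.eq_iff] at hmem
          rcases hmem with ⟨h1, _⟩ | ⟨_, h2⟩
          · have := congrArg Subtype.val h1
            rw [hfval s hs.2] at this
            exact hs.1 this
          · have := congrArg Subtype.val h2
            rw [hfval t ht.2] at this
            exact ht.1 this
      obtain ⟨q2, hq2⟩ := walk_proj' f {u, v} (fun s t hst hs ht => hfadj s t hst hs ht)
        q1
        (by intro z hz
            simp only [Set.mem_insert_iff, Set.mem_singleton_iff, not_or]
            exact ⟨fun h => hq1u (h ▸ hz), fun h => hq1v (h ▸ hz)⟩)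
      have hfb : f b = b' := by rw [hfz b hbv hbu]
      have hfa : f a = a' := by rw [hfz a hav hau]
      have hedge : (H.deleteEdges {s(u', a')}).Adj u' b' := by
        rw [deleteEdges_adj]
        refine ⟨hHub, ?_⟩
        rw [Set.mem_singleton_iff, Sym2.eq_iff]
        rintro (⟨_, h1⟩ | ⟨h1, _⟩)
        · exact ha'b' h1.symm
        · exact hu'a' h1
      have w3 : (H.deleteEdges {s(u', a')}).Walk u' a' :=
        Walk.cons hedge (q2.copy hfb hfa)
      obtain ⟨w, _, hwS'⟩ := hcut' w3
      exact hS'empty w hwS'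
  -- choose the two special colors
  obtain ⟨γ, δ, hδA, hk, hγB⟩ :
      ∃ γ δ : Fin n₀, δ ≠ c' a' ∧ (γ = c' u' ∨ δ = c' u') ∧
        (γ ≠ c' b' ∨ (γ = c' u' ∧ ¬ G.Adj a b)) := by
    have hcard : 1 < Fintype.card (Fin n₀) := by rw [Fintype.card_fin]; omega
    by_cases h1 : c' u' = c' b'
    · by_cases h2' : c' u' = c' a'
      · have hnab : ¬ G.Adj a b := by
          intro hadjab
          obtain ⟨S₃, hS₃u, hS₃a, hcut₃, hadj₃, _⟩ := hc' u' a' hu'a'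
          have hHba : H.Adj b' a' :=
            ⟨fun h => hab (congrArg Subtype.val h).symm, Or.inl hadjab.symm⟩
          have hedge1 : (H.deleteEdges {s(u', a')}).Adj u' b' := by
            rw [deleteEdges_adj]
            refine ⟨hHub, ?_⟩
            rw [Set.mem_singleton_iff, Sym2.eq_iff]
            rintro (⟨_, hx1⟩ | ⟨hx1, _⟩)
            · exact ha'b' hx1.symm
            · exact hu'a' hx1
          have hedge2 : (H.deleteEdges {s(u', a')}).Adj b' a' := by
            rw [deleteEdges_adj]
            refine ⟨hHba, ?_⟩
            rw [Set.mem_singleton_iff, Sym2.eq_iff]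
            rintro (⟨hx1, _⟩ | ⟨hx1, _⟩)
            · exact hu'b' hx1.symm
            · exact ha'b' hx1.symm
          obtain ⟨w, hwsup, hwS₃⟩ :=
            hcut₃ (Walk.cons hedge1 (Walk.cons hedge2 Walk.nil))
          have hwb : w = b' := by
            simp only [Walk.support_cons, Walk.support_nil, List.mem_cons,
              List.mem_singleton, List.not_mem_nil, or_false] at hwsup
            rcases hwsup with rfl | rfl | rfl
            · exact absurd hwS₃ hS₃u
            · rfl
            · exact absurd hwS₃ hS₃a
          subst hwb
          rcases hadj₃ hHua with hI | hI
          · exact hu'b' (hI (Set.mem_insert _ _) (Set.mem_insert_of_mem _ hwS₃) h1)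
          · exact ha'b'
              (hI (Set.mem_insert _ _) (Set.mem_insert_of_mem _ hwS₃) (h2'.symm.trans h1))
        obtain ⟨δ, hδ⟩ := Fintype.exists_ne_of_one_lt_card hcard (c' a')
        exact ⟨c' u', δ, hδ, Or.inl rfl, Or.inr ⟨rfl, hnab⟩⟩
      · obtain ⟨γ, hγ⟩ := Fintype.exists_ne_of_one_lt_card hcard (c' b')
        exact ⟨γ, c' u', h2', Or.inr rfl, Or.inl hγ⟩
    · obtain ⟨δ, hδ⟩ := Fintype.exists_ne_of_one_lt_card hcard (c' a')
      exact ⟨c' u', δ, hδ, Or.inl rfl, Or.inl h1⟩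
  -- the coloring of G
  set c : V → Fin n₀ :=
    fun z => if hz : z = v then δ else if z = u then γ else c' ⟨z, hz⟩ with hcdef
  have hcv : c v = δ := by simp [hcdef]
  have hcu : c u = γ := by simp [hcdef, huv_ne]
  have hcz : ∀ (z : V) (h1 : z ≠ v), z ≠ u → c z = c' ⟨z, h1⟩ := by
    intro z h1 hzu; simp [hcdef, h1, hzu]
  have hca : c a = c' a' := hcz a hav hau
  have hcb : c b = c' b' := hcz b hbv hbu
  have hcf : ∀ z : V, z ≠ u → z ≠ v → c z = c' (f z) := by
    intro z h2' h1
    rw [hcz z h1 h2', hfz z h1 h2']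
  suffices hrvd : IsRVDColoring G c by exact Nat.sInf_le ⟨c, hrvd⟩
  -- generic projection lemma
  have hproj : ∀ (x₀ y₀ : V) (tg : Sym2 {x : V // x ≠ v}),
      (∀ s t : V, G.Adj s t → s(f s, f t) = tg → s(s, t) = s(x₀, y₀)) →
      ∀ s t : V, (G.deleteEdges {s(x₀, y₀)}).Adj s t →
        (H.deleteEdges {tg}).Adj (f s) (f t) ∨ f s = f t := by
    intro x₀ y₀ tg hexc s t hst
    rw [deleteEdges_adj] at hst
    obtain ⟨hGst, hdel⟩ := hst
    by_cases hft : f s = f t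
    · exact Or.inr hft
    · left
      rw [deleteEdges_adj]
      refine ⟨⟨hft, ?_⟩, ?_⟩
      · by_cases hs : s = v
        · right; left
          have ht : t ≠ v := fun h => hGst.ne (hs.trans h.symm)
          refine ⟨by rw [hs, hfv], ?_⟩
          rw [hfval t ht]
          rw [hs] at hGst
          exact hGst
        · by_cases ht : t = v
          · right; right
            refine ⟨by rw [ht, hfv], ?_⟩
            rw [hfval s hs]
            rw [ht] at hGst
            exact hGst.symm
          · left
            rw [hfval s hs, hfval t ht]; exact hGst
      · intro hmem
        rw [Set.mem_singleton_iff] at hmem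
        exact hdel (by rw [Set.mem_singleton_iff]; exact hexc s t hGst hmem)
  have hfinj' : ∀ z₁ z₂ : V, f z₁ = f z₂ →
      z₁ = z₂ ∨ ((z₁ = u ∨ z₁ = v) ∧ (z₂ = u ∨ z₂ = v)) := by
    intro z₁ z₂ he
    by_cases h1 : z₁ = v
    · subst h1
      rw [hfv] at he
      rcases hfuv z₂ he.symm with h4 | h4
      · exact Or.inr ⟨Or.inr rfl, Or.inl h4⟩
      · exact Or.inl h4.symm
    · by_cases h4 : z₂ = v
      · subst h4
        rw [hfv] at he
        rcases hfuv z₁ he with h3 | h3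
        · exact Or.inr ⟨Or.inl h3, Or.inr rfl⟩
        · exact Or.inl h3
      · left
        have := congrArg Subtype.val he
        rwa [hfval z₁ h1, hfval z₂ h4] at this
  have hinj_lift : ∀ (T : Set V), (∀ z ∈ T, c z = c' (f z)) → Set.InjOn f T →
      Set.InjOn c' (f '' T) → Set.InjOn c T := by
    intro T h1 hfi h3 z₁ m₁ z₂ m₂ he
    exact hfi m₁ m₂ (h3 (Set.mem_image_of_mem f m₁) (Set.mem_image_of_mem f m₂)
      (by rw [← h1 z₁ m₁, ← h1 z₂ m₂]; exact he))
  have hfinjT : ∀ (T : Set V) (w₀ : V), (∀ z ∈ T, z = w₀ ∨ (z ≠ u ∧ z ≠ v)) →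
      Set.InjOn f T := by
    intro T w₀ hT z₁ m₁ z₂ m₂ he
    rcases hfinj' z₁ z₂ he with h1 | ⟨h1, h4⟩
    · exact h1
    · rcases hT z₁ m₁ with rfl | ⟨hz1, hz2⟩
      · rcases hT z₂ m₂ with h5 | ⟨hz1, hz2⟩
        · exact h5.symm
        · exact absurd h4 (by rintro (h | h); exacts [hz1 h, hz2 h])
      · exact absurd h1 (by rintro (h | h); exacts [hz1 h, hz2 h])
  have hnadj_ub : ∀ y : V, y ≠ v → y ≠ a → ¬ G.Adj u y := fun y h1 h4 hadj => by
    rcases hnbru y hadj with h | h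
    exacts [h1 h, h4 h]
  have hnadj_vb : ∀ y : V, y ≠ u → y ≠ b → ¬ G.Adj v y := fun y h1 h4 hadj => by
    rcases hnbrv y hadj with h | h
    exacts [h1 h, h4 h]
  have hnadjH : ∀ (y : V) (hy : y ≠ v), y ≠ u → y ≠ a → y ≠ b → ¬ H.Adj u' ⟨y, hy⟩ := by
    intro y hy h1 h4 h3 hadj
    rcases hadj.2 with h5 | ⟨_, h5⟩ | ⟨h5, _⟩
    · exact (hnadj_ub y hy h4) h5
    · exact (hnadj_vb y h1 h3) h5
    · exact h1 h5
  have hadjH_iff : ∀ (x y : V) (hx : x ≠ v) (hy : y ≠ v), x ≠ u → y ≠ u → x ≠ y →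
      (G.Adj x y ↔ H.Adj ⟨x, hx⟩ ⟨y, hy⟩) := by
    intro x y hx hy hxu hyu hxy
    constructor
    · intro h
      exact ⟨fun hh => hxy (congrArg Subtype.val hh), Or.inl h⟩
    · intro h
      rcases h.2 with h5 | ⟨h5, _⟩ | ⟨h5, _⟩
      · exact h5
      · exact absurd h5 hxu
      · exact absurd h5 hyu
  -- symmetry of the pair condition
  have OKsymm : ∀ x y : V, (∃ S : Set V, x ∉ S ∧ y ∉ S ∧
      (∀ p : (G.deleteEdges {s(x, y)}).Walk x y, ∃ w ∈ p.support, w ∈ S) ∧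
      (G.Adj x y → Set.InjOn c (insert x S) ∨ Set.InjOn c (insert y S)) ∧
      (¬ G.Adj x y → Set.InjOn c S)) →
      (∃ S : Set V, y ∉ S ∧ x ∉ S ∧
      (∀ p : (G.deleteEdges {s(y, x)}).Walk y x, ∃ w ∈ p.support, w ∈ S) ∧
      (G.Adj y x → Set.InjOn c (insert y S) ∨ Set.InjOn c (insert x S)) ∧
      (¬ G.Adj y x → Set.InjOn c S)) := by
    rintro x y ⟨S, h1, h4, h3, h5, h6⟩
    refine ⟨S, h4, h1, ?_, fun h => Or.symm (h5 h.symm), fun h => h6 fun h' => h h'.symm⟩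
    rw [show s(y, x) = s(x, y) from Sym2.eq_swap]
    intro p
    obtain ⟨w, hw, hwS⟩ := h3 p.reverse
    refine ⟨w, ?_, hwS⟩
    rwa [Walk.support_reverse, List.mem_reverse] at hw
  -- pair (u, v)
  have pairUV : ∃ S : Set V, u ∉ S ∧ v ∉ S ∧
      (∀ p : (G.deleteEdges {s(u, v)}).Walk u v, ∃ w ∈ p.support, w ∈ S) ∧
      (G.Adj u v → Set.InjOn c (insert u S) ∨ Set.InjOn c (insert v S)) ∧
      (¬ G.Adj u v → Set.InjOn c S) := by
    refine ⟨{a}, by simp [Ne.symm hau], by simp [Ne.symm hav], ?_, ?_,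
      fun h => absurd huv h⟩
    · intro p
      obtain ⟨w, hadj, q, hsupp⟩ := walk_decomp' p huv_ne
      rw [deleteEdges_adj] at hadj
      rcases hnbru w hadj.1 with h | h
      · exact absurd (by rw [h]; exact rfl) hadj.2
      · exact ⟨w, by rw [hsupp]; exact List.mem_cons_of_mem _ q.start_mem_support, h⟩
    · intro _
      right
      exact injOn_pair' (by rw [hcv, hca]; exact hδA)
  -- pair (u, a)
  have pairUA : ∃ S : Set V, u ∉ S ∧ a ∉ S ∧
      (∀ p : (G.deleteEdges {s(u, a)}).Walk u a, ∃ w ∈ p.support, w ∈ S) ∧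
      (G.Adj u a → Set.InjOn c (insert u S) ∨ Set.InjOn c (insert a S)) ∧
      (¬ G.Adj u a → Set.InjOn c S) := by
    refine ⟨{v}, by simp [huv_ne], by simp [hav], ?_, ?_, fun h => absurd hadj_ua h⟩
    · intro p
      obtain ⟨w, hadj, q, hsupp⟩ := walk_decomp' p (Ne.symm hau)
      rw [deleteEdges_adj] at hadj
      rcases hnbru w hadj.1 with h | h
      · exact ⟨w, by rw [hsupp]; exact List.mem_cons_of_mem _ q.start_mem_support, h⟩
      · exact absurd (by rw [h]; exact rfl) hadj.2
    · intro _
      right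
      exact injOn_pair' (by rw [hca, hcv]; exact Ne.symm hδA)
  -- pair (u, y) for other y
  have pairUgen : ∀ y : V, y ≠ u → y ≠ v → y ≠ a → ∃ S : Set V, u ∉ S ∧ y ∉ S ∧
      (∀ p : (G.deleteEdges {s(u, y)}).Walk u y, ∃ w ∈ p.support, w ∈ S) ∧
      (G.Adj u y → Set.InjOn c (insert u S) ∨ Set.InjOn c (insert y S)) ∧
      (¬ G.Adj u y → Set.InjOn c S) := by
    intro y hyu hyv hya
    refine ⟨{v, a}, by simp [huv_ne, Ne.symm hau], by simp [hyv, hya], ?_, ?_, ?_⟩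
    · intro p
      obtain ⟨w, hadj, q, hsupp⟩ := walk_decomp' p (Ne.symm hyu)
      rw [deleteEdges_adj] at hadj
      refine ⟨w, by rw [hsupp]; exact List.mem_cons_of_mem _ q.start_mem_support, ?_⟩
      rcases hnbru w hadj.1 with h | h
      · exact h ▸ Set.mem_insert _ _
      · exact h ▸ Set.mem_insert_of_mem _ rfl
    · intro h
      exact absurd h (hnadj_ub y hyv hya)
    · intro _
      exact injOn_pair' (by rw [hcv, hca]; exact hδA)
  -- pair (v, b)
  have pairVB : ∃ S : Set V, v ∉ S ∧ b ∉ S ∧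
      (∀ p : (G.deleteEdges {s(v, b)}).Walk v b, ∃ w ∈ p.support, w ∈ S) ∧
      (G.Adj v b → Set.InjOn c (insert v S) ∨ Set.InjOn c (insert b S)) ∧
      (¬ G.Adj v b → Set.InjOn c S) := by
    refine ⟨{a}, by simp [Ne.symm hav], by simp [Ne.symm hab], ?_, ?_,
      fun h => absurd hadj_vb h⟩
    · intro p
      have hu2 : ∀ z, (G.deleteEdges {s(v, b)}).Adj u z → z = v ∨ z = a := by
        intro z hz; rw [deleteEdges_adj] at hz; exact hnbru z hz.1
      have hv2 : ∀ z, (G.deleteEdges {s(v, b)}).Adj v z → z = u ∨ z = a := by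
        intro z hz
        rw [deleteEdges_adj] at hz
        rcases hnbrv z hz.1 with h | h
        · exact Or.inl h
        · exfalso
          apply hz.2
          rw [h]
          exact rfl
      have hmm := walk_trapped' u v a hu2 hv2 p (Or.inr rfl)
        (by rintro (h | h); exacts [hbu h, hbv h])
      exact ⟨a, hmm, rfl⟩
    · intro _
      left
      exact injOn_pair' (by rw [hcv, hca]; exact hδA)
  -- pair (v, a)
  have pairVA : ∃ S : Set V, v ∉ S ∧ a ∉ S ∧
      (∀ p : (G.deleteEdges {s(v, a)}).Walk v a, ∃ w ∈ p.support, w ∈ S) ∧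
      (G.Adj v a → Set.InjOn c (insert v S) ∨ Set.InjOn c (insert a S)) ∧
      (¬ G.Adj v a → Set.InjOn c S) := by
    have hnadjva : ¬ G.Adj v a := hnadj_vb a hau hab
    rcases hγB with hγB | ⟨hγα, hnab⟩
    · -- S = {u, b}
      refine ⟨{u, b}, by simp [Ne.symm huv_ne, Ne.symm hbv], by simp [hau, hab], ?_,
        fun h => absurd h hnadjva, fun _ => injOn_pair' (by rw [hcu, hcb]; exact hγB)⟩
      intro p
      obtain ⟨w, hadj, q, hsupp⟩ := walk_decomp' p (Ne.symm hav)
      rw [deleteEdges_adj] at hadj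
      refine ⟨w, by rw [hsupp]; exact List.mem_cons_of_mem _ q.start_mem_support, ?_⟩
      rcases hnbrv w hadj.1 with h | h
      · exact h ▸ Set.mem_insert _ _
      · exact h ▸ Set.mem_insert_of_mem _ rfl
    · -- lift the cut of the pair (a', b')
      obtain ⟨S', ha'S', hb'S', hcut', hadjS', hnadjS'⟩ := hc' a' b' ha'b'
      have hHnab : ¬ H.Adj a' b' := by
        intro h
        rcases h.2 with h4 | ⟨h4, _⟩ | ⟨h4, _⟩
        · exact hnab h4
        · exact hau h4
        · exact hbu h4
      have hinjS' : Set.InjOn c' S' := hnadjS' hHnab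
      have hu'S' : u' ∈ S' := by
        have hedge1 : (H.deleteEdges {s(a', b')}).Adj a' u' := by
          rw [deleteEdges_adj]
          refine ⟨hHua.symm, ?_⟩
          rw [Set.mem_singleton_iff, Sym2.eq_iff]
          rintro (⟨_, h4⟩ | ⟨h4, _⟩)
          · exact hu'b' h4
          · exact ha'b' h4
        have hedge2 : (H.deleteEdges {s(a', b')}).Adj u' b' := by
          rw [deleteEdges_adj]
          refine ⟨hHub, ?_⟩
          rw [Set.mem_singleton_iff, Sym2.eq_iff]
          rintro (⟨h4, _⟩ | ⟨_, h4⟩)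
          · exact hu'a' h4
          · exact ha'b' h4.symm
        obtain ⟨w, hwsup, hwS'⟩ := hcut' (Walk.cons hedge1 (Walk.cons hedge2 Walk.nil))
        have hwu : w = u' := by
          simp only [Walk.support_cons, Walk.support_nil, List.mem_cons,
            List.mem_singleton, List.not_mem_nil, or_false] at hwsup
          rcases hwsup with rfl | rfl | rfl
          · exact absurd hwS' ha'S'
          · rfl
          · exact absurd hwS' hb'S'
        exact hwu ▸ hwS'
      refine ⟨insert u (Subtype.val '' (S' \ {u'})), ?_, ?_, ?_,
        fun h => absurd h hnadjva, ?_⟩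
      · intro hmem
        rcases Set.mem_insert_iff.1 hmem with h4 | ⟨w, _, hw⟩
        · exact huv_ne h4.symm
        · exact w.2 hw
      · intro hmem
        rcases Set.mem_insert_iff.1 hmem with h4 | ⟨w, hw1, hw2⟩
        · exact hau h4
        · exact ha'S' ((Subtype.ext hw2 : w = a') ▸ hw1.1)
      · -- the cut condition
        intro p
        by_cases hup : u ∈ p.support
        · exact ⟨u, hup, Set.mem_insert _ _⟩
        · obtain ⟨w, hadj, p₁, hsupp⟩ := walk_decomp' p (Ne.symm hav)
          rw [deleteEdges_adj] at hadj
          have hwb : w = b := by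
            rcases hnbrv w hadj.1 with h4 | h4
            · exfalso
              apply hup
              rw [hsupp]
              exact List.mem_cons_of_mem _ (h4 ▸ p₁.start_mem_support)
            · exact h4
          have hup₁ : u ∉ p₁.support := fun h4 => hup (by
            rw [hsupp]; exact List.mem_cons_of_mem _ h4)
          have ho : ∀ z, (G.deleteEdges {s(v, a)}).Adj v z → z = u ∨ z = b := by
            intro z hz
            rw [deleteEdges_adj] at hz
            exact hnbrv z hz.1
          obtain ⟨q₁, hq₁v, hq₁s⟩ := walk_avoid' v u b ho p₁.length w a
            (hwb ▸ hbv) hav p₁ le_rfl hup₁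
          have hq₁u : u ∉ q₁.support := fun h4 => hup₁ (hq₁s u h4)
          have hexc : ∀ s t : V, G.Adj s t → s(f s, f t) = s(a', b') →
              s(s, t) = s(v, a) := by
            intro s t hst heq
            exfalso
            rw [Sym2.eq_iff] at heq
            rcases heq with ⟨h4, h5⟩ | ⟨h4, h5⟩
            · rw [hfback s a hav hau h4, hfback t b hbv hbu h5] at hst
              exact hnab hst
            · rw [hfback s b hbv hbu h4, hfback t a hav hau h5] at hst
              exact hnab hst.symm
          obtain ⟨q₂, hq₂⟩ := walk_proj' f ∅
            (fun s t hst _ _ => hproj v a (s(a', b')) hexc s t hst) q₁ (by simp)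
          obtain ⟨w₂, hwsup, hwS'⟩ := hcut'
            ((q₂.copy (by rw [hwb, hfz b hbv hbu]) (by rw [hfz a hav hau])).reverse)
          rw [Walk.support_reverse, List.mem_reverse, Walk.support_copy] at hwsup
          obtain ⟨z, hzq, hfzw⟩ := hq₂ w₂ hwsup
          have hzu : z ≠ u := fun h4 => hq₁u (h4 ▸ hzq)
          have hzv : z ≠ v := fun h4 => hq₁v (h4 ▸ hzq)
          refine ⟨z, ?_, ?_⟩
          · rw [hsupp]
            exact List.mem_cons_of_mem _ (hq₁s z hzq)
          · apply Set.mem_insert_of_mem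
            refine ⟨⟨z, hzv⟩, ⟨?_, ?_⟩, rfl⟩
            · rw [← hfz z hzv hzu, hfzw]
              exact hwS'
            · intro h4
              exact hzu (congrArg Subtype.val h4)
      · -- rainbow
        intro _
        apply hinj_lift _ ?_ (hfinjT _ u ?_) ?_
        · intro z hz
          rcases Set.mem_insert_iff.1 hz with rfl | ⟨w, hw1, rfl⟩
          · rw [hcu, hγα, hfu]
          · exact hcf _ (fun h6 => hw1.2 (Subtype.ext h6)) w.2
        · intro z hz
          rcases Set.mem_insert_iff.1 hz with rfl | ⟨w, hw1, rfl⟩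
          · exact Or.inl rfl
          · exact Or.inr ⟨fun h6 => hw1.2 (Subtype.ext h6), w.2⟩
        · apply hinjS'.mono
          rintro w ⟨z, hz, rfl⟩
          rcases Set.mem_insert_iff.1 hz with rfl | ⟨w₂, hw₂, rfl⟩
          · rw [hfu]
            exact hu'S'
          · rw [hfz _ w₂.2 (fun h6 => hw₂.2 (Subtype.ext h6))]
            exact hw₂.1
  -- pair (v, y), generic y
  have pairVgen : ∀ (y : V) (hyv : y ≠ v), y ≠ u → y ≠ a → y ≠ b →
      ∃ S : Set V, v ∉ S ∧ y ∉ S ∧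
      (∀ p : (G.deleteEdges {s(v, y)}).Walk v y, ∃ w ∈ p.support, w ∈ S) ∧
      (G.Adj v y → Set.InjOn c (insert v S) ∨ Set.InjOn c (insert y S)) ∧
      (¬ G.Adj v y → Set.InjOn c S) := by
    intro y hyv hyu hya hyb
    obtain ⟨S', hu'S', hy'S', hcut', hadjS', hnadjS'⟩ := hc' u' ⟨y, hyv⟩
      (fun h => hyu (congrArg Subtype.val h).symm)
    have hSnotuv : ∀ z ∈ Subtype.val '' (S' \ {u'}), z ≠ u ∧ z ≠ v := by
      rintro z ⟨w, hw1, rfl⟩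
      exact ⟨fun h6 => hw1.2 (Subtype.ext h6), w.2⟩
    refine ⟨Subtype.val '' (S' \ {u'}), ?_, ?_, ?_, ?_, ?_⟩
    · intro h
      exact (hSnotuv v h).2 rfl
    · rintro ⟨w, hw1, rfl⟩
      exact hy'S' hw1.1
    · intro p
      have hexc : ∀ s t : V, G.Adj s t → s(f s, f t) = s(u', ⟨y, hyv⟩) →
          s(s, t) = s(v, y) := by
        intro s t hst heq
        exfalso
        rw [Sym2.eq_iff] at heq
        have key : ∀ s₀ t₀ : V, G.Adj s₀ t₀ → f s₀ = u' → f t₀ = ⟨y, hyv⟩ → False := by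
          intro s₀ t₀ hst₀ h4 h5
          rw [hfback t₀ y hyv hyu h5] at hst₀
          rcases hfuv s₀ h4 with h6 | h6
          · rw [h6] at hst₀
            exact (hnadj_ub y hyv hya) hst₀
          · rw [h6] at hst₀
            exact (hnadj_vb y hyu hyb) hst₀
        rcases heq with ⟨h4, h5⟩ | ⟨h4, h5⟩
        · exact key s t hst h4 h5
        · exact key t s hst.symm h5 h4
      obtain ⟨q₂, hq₂⟩ := walk_proj' f ∅
        (fun s t hst _ _ => hproj v y (s(u', ⟨y, hyv⟩)) hexc s t hst) p (by simp)
      obtain ⟨w, hwsup, hwS'⟩ := hcut' (q₂.copy hfv (hfz y hyv hyu))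
      rw [Walk.support_copy] at hwsup
      obtain ⟨z, hzp, hfzw⟩ := hq₂ w hwsup
      have hwne : w ≠ u' := fun h => hu'S' (h ▸ hwS')
      have hzv : z ≠ v := fun h => hwne (by rw [← hfzw, h, hfv])
      have hzu : z ≠ u := fun h => hwne (by rw [← hfzw, h, hfu])
      refine ⟨z, hzp, ⟨z, hzv⟩, ⟨?_, fun h => hzu (congrArg Subtype.val h)⟩, rfl⟩
      rw [← hfz z hzv hzu, hfzw]
      exact hwS'
    · intro h
      exact absurd h (hnadj_vb y hyu hyb)
    · intro _
      apply hinj_lift _ (fun z hz => hcf z (hSnotuv z hz).1 (hSnotuv z hz).2)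
        (hfinjT _ u (fun z hz => Or.inr (hSnotuv z hz)))
      apply (hnadjS' (hnadjH y hyv hyu hya hyb)).mono
      rintro w ⟨z, hz1, rfl⟩
      obtain ⟨w₂, hw₂, rfl⟩ := hz1
      rw [hfz _ w₂.2 (fun h6 => hw₂.2 (Subtype.ext h6))]
      exact hw₂.1
  -- pair (x, y) with x, y outside {u, v}
  have pairGen : ∀ (x y : V) (hxv : x ≠ v) (hyv : y ≠ v), x ≠ u → y ≠ u → x ≠ y →
      ∃ S : Set V, x ∉ S ∧ y ∉ S ∧
      (∀ p : (G.deleteEdges {s(x, y)}).Walk x y, ∃ w ∈ p.support, w ∈ S) ∧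
      (G.Adj x y → Set.InjOn c (insert x S) ∨ Set.InjOn c (insert y S)) ∧
      (¬ G.Adj x y → Set.InjOn c S) := by
    intro x y hxv hyv hxu hyu hxy
    obtain ⟨S', hx'S', hy'S', hcut', hadjS', hnadjS'⟩ := hc' ⟨x, hxv⟩ ⟨y, hyv⟩
      (fun h => hxy (congrArg Subtype.val h))
    obtain ⟨k, o, e, hkco, hkc, honbr⟩ :
        ∃ k o e : V, ((k = u ∧ o = v ∧ e = b) ∨ (k = v ∧ o = u ∧ e = a)) ∧
          c k = c' u' ∧ (∀ z, G.Adj o z → z = k ∨ z = e) := by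
      rcases hk with h | h
      · exact ⟨u, v, b, Or.inl ⟨rfl, rfl, rfl⟩, by rw [hcu]; exact h, hnbrv⟩
      · exact ⟨v, u, a, Or.inr ⟨rfl, rfl, rfl⟩, by rw [hcv]; exact h, hnbru⟩
    have hfk : f k = u' := by
      rcases hkco with ⟨h4, _, _⟩ | ⟨h4, _, _⟩
      · rw [h4, hfu]
      · rw [h4, hfv]
    have hxk : x ≠ k := by
      rcases hkco with ⟨h4, _, _⟩ | ⟨h4, _, _⟩
      · exact h4 ▸ hxu
      · exact h4 ▸ hxv
    have hyk : y ≠ k := by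
      rcases hkco with ⟨h4, _, _⟩ | ⟨h4, _, _⟩
      · exact h4 ▸ hyu
      · exact h4 ▸ hyv
    have hxo : x ≠ o := by
      rcases hkco with ⟨_, h4, _⟩ | ⟨_, h4, _⟩
      · exact h4 ▸ hxv
      · exact h4 ▸ hxu
    have hyo : y ≠ o := by
      rcases hkco with ⟨_, h4, _⟩ | ⟨_, h4, _⟩
      · exact h4 ▸ hyv
      · exact h4 ▸ hyu
    have hcover : ∀ z : V, z ≠ k → z ≠ o → z ≠ u ∧ z ≠ v := by
      intro z h1 h4
      rcases hkco with ⟨h5, h6, _⟩ | ⟨h5, h6, _⟩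
      · exact ⟨h5 ▸ h1, h6 ▸ h4⟩
      · exact ⟨h6 ▸ h4, h5 ▸ h1⟩
    set S : Set V := Subtype.val '' (S' \ {u'}) ∪ {z : V | z = k ∧ u' ∈ S'} with hSdef
    have hSprop : ∀ z ∈ S, z = k ∨ (z ≠ u ∧ z ≠ v) := by
      intro z hz
      rcases (Set.mem_union _ _ _).1 hz with hz1 | hz1
      · obtain ⟨w, hw1, rfl⟩ := hz1
        exact Or.inr ⟨fun h6 => hw1.2 (Subtype.ext h6), w.2⟩
      · exact Or.inl hz1.1
    have hcS : ∀ z ∈ S, c z = c' (f z) := by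
      intro z hz
      rcases (Set.mem_union _ _ _).1 hz with hz1 | hz1
      · obtain ⟨w, hw1, rfl⟩ := hz1
        exact hcf _ (fun h6 => hw1.2 (Subtype.ext h6)) w.2
      · rw [hz1.1, hfk]
        exact hz1.1 ▸ hkc
    have hfim : f '' S ⊆ S' := by
      rintro w ⟨z, hz, rfl⟩
      rcases (Set.mem_union _ _ _).1 hz with hz1 | hz1
      · obtain ⟨w₂, hw₂, rfl⟩ := hz1
        rw [hfz _ w₂.2 (fun h6 => hw₂.2 (Subtype.ext h6))]
        exact hw₂.1
      · rw [hz1.1, hfk]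
        exact hz1.2
    have hxS : x ∉ S := by
      intro hmem
      rcases (Set.mem_union _ _ _).1 hmem with hz1 | hz1
      · obtain ⟨w, hw1, hw2⟩ := hz1
        exact hx'S' ((Subtype.ext hw2 : w = ⟨x, hxv⟩) ▸ hw1.1)
      · exact hxk hz1.1
    have hyS : y ∉ S := by
      intro hmem
      rcases (Set.mem_union _ _ _).1 hmem with hz1 | hz1
      · obtain ⟨w, hw1, hw2⟩ := hz1
        exact hy'S' ((Subtype.ext hw2 : w = ⟨y, hyv⟩) ▸ hw1.1)
      · exact hyk hz1.1
    have hexc : ∀ s t : V, G.Adj s t → s(f s, f t) = s(⟨x, hxv⟩, ⟨y, hyv⟩) →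
        s(s, t) = s(x, y) := by
      intro s t hst heq
      rw [Sym2.eq_iff] at heq
      rw [Sym2.eq_iff]
      rcases heq with ⟨h4, h5⟩ | ⟨h4, h5⟩
      · exact Or.inl ⟨hfback s x hxv hxu h4, hfback t y hyv hyu h5⟩
      · exact Or.inr ⟨hfback s y hyv hyu h4, hfback t x hxv hxu h5⟩
    refine ⟨S, hxS, hyS, ?_, ?_, ?_⟩
    · intro p
      by_cases hu'S : u' ∈ S'
      · by_cases hkp : k ∈ p.support
        · exact ⟨k, hkp, Set.mem_union_right _ ⟨rfl, hu'S⟩⟩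
        · have ho2 : ∀ z, (G.deleteEdges {s(x, y)}).Adj o z → z = k ∨ z = e := by
            intro z hz
            rw [deleteEdges_adj] at hz
            exact honbr z hz.1
          obtain ⟨q, hqo, hqs⟩ := walk_avoid' o k e ho2 p.length x y hxo hyo p
            le_rfl hkp
          have hqk : k ∉ q.support := fun h4 => hkp (hqs k h4)
          obtain ⟨q₂, hq₂⟩ := walk_proj' f ∅
            (fun s t hst _ _ => hproj x y _ hexc s t hst) q (by simp)
          obtain ⟨w, hwsup, hwS'⟩ := hcut' (q₂.copy (hfz x hxv hxu) (hfz y hyv hyu))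
          rw [Walk.support_copy] at hwsup
          obtain ⟨z, hzq, hfzw⟩ := hq₂ w hwsup
          have hzk : z ≠ k := fun h4 => hqk (h4 ▸ hzq)
          have hzo : z ≠ o := fun h4 => hqo (h4 ▸ hzq)
          obtain ⟨hzu, hzv⟩ := hcover z hzk hzo
          refine ⟨z, hqs z hzq, Set.mem_union_left _ ?_⟩
          refine ⟨⟨z, hzv⟩, ⟨?_, fun h4 => hzu (congrArg Subtype.val h4)⟩, rfl⟩
          rw [← hfz z hzv hzu, hfzw]
          exact hwS'
      · obtain ⟨q₂, hq₂⟩ := walk_proj' f ∅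
          (fun s t hst _ _ => hproj x y _ hexc s t hst) p (by simp)
        obtain ⟨w, hwsup, hwS'⟩ := hcut' (q₂.copy (hfz x hxv hxu) (hfz y hyv hyu))
        rw [Walk.support_copy] at hwsup
        obtain ⟨z, hzp, hfzw⟩ := hq₂ w hwsup
        have hwne : w ≠ u' := fun h4 => hu'S (h4 ▸ hwS')
        have hzv : z ≠ v := fun h4 => hwne (by rw [← hfzw, h4, hfv])
        have hzu : z ≠ u := fun h4 => hwne (by rw [← hfzw, h4, hfu])
        refine ⟨z, hzp, Set.mem_union_left _ ?_⟩
        refine ⟨⟨z, hzv⟩, ⟨?_, fun h4 => hzu (congrArg Subtype.val h4)⟩, rfl⟩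
        rw [← hfz z hzv hzu, hfzw]
        exact hwS'
    · intro hGxy
      have hxyS : ∀ (w₀ : V) (hw₀ : w₀ ≠ v), w₀ ≠ u →
          Set.InjOn c' (insert ⟨w₀, hw₀⟩ S') → Set.InjOn c (insert w₀ S) := by
        intro w₀ hw₀ hw₀u hI
        apply hinj_lift _ ?_ ?_ ?_
        · intro z hz
          rcases Set.mem_insert_iff.1 hz with rfl | hz
          · exact hcf z hw₀u hw₀
          · exact hcS z hz
        · apply hfinjT _ k
          intro z hz
          rcases Set.mem_insert_iff.1 hz with rfl | hz
          · exact Or.inr ⟨hw₀u, hw₀⟩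
          · exact hSprop z hz
        · apply hI.mono
          rintro w ⟨z, hz, rfl⟩
          rcases Set.mem_insert_iff.1 hz with rfl | hz
          · rw [hfz z hw₀ hw₀u]
            exact Set.mem_insert _ _
          · exact Set.mem_insert_of_mem _ (hfim (Set.mem_image_of_mem f hz))
      rcases hadjS' ((hadjH_iff x y hxv hyv hxu hyu hxy).1 hGxy) with hI | hI
      · exact Or.inl (hxyS x hxv hxu hI)
      · exact Or.inr (hxyS y hyv hyu hI)
    · intro hGxy
      have hnH : ¬ H.Adj ⟨x, hxv⟩ ⟨y, hyv⟩ :=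
        fun h => hGxy ((hadjH_iff x y hxv hyv hxu hyu hxy).2 h)
      apply hinj_lift _ hcS (hfinjT _ k hSprop)
      exact (hnadjS' hnH).mono hfim
  -- dispatch
  intro x y hxy
  by_cases hxu : x = u
  · rw [hxu]
    by_cases hyv : y = v
    · rw [hyv]
      exact pairUV
    · by_cases hya : y = a
      · rw [hya]
        exact pairUA
      · exact pairUgen y (fun h => hxy (hxu.trans h.symm)) hyv hya
  · by_cases hxv : x = v
    · rw [hxv]
      by_cases hyu : y = u
      · rw [hyu]
        exact OKsymm u v pairUV
      · by_cases hyb : y = b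
        · rw [hyb]
          exact pairVB
        · by_cases hya : y = a
          · rw [hya]
            exact pairVA
          · exact pairVgen y (fun h => hxy (hxv.trans h.symm)) hyu hya hyb
    · by_cases hyu : y = u
      · rw [hyu]
        by_cases hxa : x = a
        · rw [hxa]
          exact OKsymm u a pairUA
        · exact OKsymm u x (pairUgen x hxu hxv hxa)
      · by_cases hyv : y = v
        · rw [hyv]
          by_cases hxb : x = b
          · rw [hxb]
            exact OKsymm v b pairVB
          · by_cases hxa : x = a
            · rw [hxa]
              exact OKsymm v a pairVA
            · exact OKsymm v x (pairVgen x hxv hxu hxa hxb)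
        · exact pairGen x y hxv hyv hxu hyu hxy
end

section
/- Let G be a nontrivial connected graph. Then rvd(G) = 1 if and only if G is a tree. -/
open SimpleGraph

variable {V : Type*}

/-- For a nontrivial connected graph `G`, `rvd(G) = 1` iff `G` is a tree. -/
theorem rvd_eq_one_iff_isTree [Fintype V] (G : SimpleGraph V)
    (hconn : G.Connected) (hnontrivial : 1 < Fintype.card V) :
    rvd G = 1 ↔ G.IsTree := by
  constructor
  · intro h
    have hne : {n | ∃ c : V → Fin n, IsRVDColoring G c}.Nonempty := by
      by_contra hemp
      rw [Set.not_nonempty_iff_eq_empty] at hemp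
      simp [rvd, hemp] at h
    have hmem := Nat.sInf_mem hne
    rw [show sInf {n | ∃ c : V → Fin n, IsRVDColoring G c} = rvd G from rfl, h] at hmem
    obtain ⟨c, hc⟩ := hmem
    refine ⟨hconn, ?_⟩
    rw [isAcyclic_iff_forall_adj_isBridge]
    intro x y hxy
    rw [isBridge_iff_adj_and_forall_walk_mem_edges]
    intro p
    obtain ⟨S, hxS, hyS, hwalk, hadj, _⟩ := hc x y hxy.ne
    have hSempty : S = ∅ := by
      rcases hadj hxy with hi | hi
      · ext s; simp only [Set.mem_empty_iff_false, iff_false]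
        intro hs
        have : s = x := hi (Set.mem_insert_of_mem _ hs) (Set.mem_insert _ _)
          (Subsingleton.elim (c s) (c x))
        exact hxS (this ▸ hs)
      · ext s; simp only [Set.mem_empty_iff_false, iff_false]
        intro hs
        have : s = y := hi (Set.mem_insert_of_mem _ hs) (Set.mem_insert _ _)
          (Subsingleton.elim (c s) (c y))
        exact hyS (this ▸ hs)
    by_contra hnotmem
    obtain ⟨v, _, hvS⟩ := hwalk (p.toDeleteEdges {s(x, y)}
      (fun e he => by simp; rintro rfl; exact hnotmem he))
    rw [hSempty] at hvS
    exact hvS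
  · rintro ⟨-, hacyclic⟩
    have hbridge := isAcyclic_iff_forall_adj_isBridge.mp hacyclic
    have h1 : 1 ∈ {n | ∃ c : V → Fin n, IsRVDColoring G c} := by
      refine ⟨fun _ => 0, fun x y hxy => ?_⟩
      by_cases hadj : G.Adj x y
      · refine ⟨∅, id, id, fun p => ?_, fun _ => Or.inl ?_, fun h => absurd hadj h⟩
        · exfalso
          have hb := (isBridge_iff_adj_and_forall_walk_mem_edges.mp (hbridge hadj))
          have hsub : ∀ e ∈ p.edges, e ∈ G.edgeSet := fun e he =>
            (edgeSet_subset_edgeSet.mpr (G.deleteEdges_le _)) (p.edges_subset_edgeSet he)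
          have hthis := hb (p.transfer G hsub)
          rw [Walk.edges_transfer] at hthis
          have h2 := p.edges_subset_edgeSet hthis
          simp [deleteEdges] at h2
        · intro a ha b hb _
          simp only [Set.mem_insert_iff, Set.mem_empty_iff_false, or_false] at ha hb
          rw [ha, hb]
      · -- nonadjacent case
        classical
        obtain ⟨w⟩ := hconn x y
        obtain ⟨p, hp⟩ : ∃ p : G.Walk x y, p.IsPath := ⟨w.toPath, w.toPath.2⟩
        cases p with
        | nil => exact absurd rfl hxy
        | cons h q =>
          rename_i v
          rw [Walk.cons_isPath_iff] at hp
          have hvx : v ≠ x := h.ne'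
          have hvy : v ≠ y := by rintro rfl; exact hadj h
          -- bridge s(x,v)
          have hbxv := (hbridge h)
          rw [isBridge_iff] at hbxv
          refine ⟨{v}, fun hx => hvx (Set.mem_singleton_iff.mp hx).symm,
            fun hy => hvy (Set.mem_singleton_iff.mp hy).symm, fun p' => ?_,
            fun ha => absurd ha hadj, fun _ => Set.injOn_singleton _ _⟩
          -- p' : walk in G.deleteEdges {s(x,y)} from x to y
          have hsub : ∀ e ∈ p'.edges, e ∈ G.edgeSet := fun e he =>
            (edgeSet_subset_edgeSet.mpr (G.deleteEdges_le _)) (p'.edges_subset_edgeSet he)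
          let p'' : G.Walk x y := p'.transfer G hsub
          have hsupp : p''.support = p'.support := Walk.support_transfer p' hsub
          -- claim s(x,v) ∈ p''.edges
          have hkey : s(x, v) ∈ p''.edges := by
            by_contra hne
            have w1 : (G.deleteEdges {s(x, v)}).Walk x y := p''.toDeleteEdges _
              (fun e he => by simp; rintro rfl; exact hne he)
            have w2 : (G.deleteEdges {s(x, v)}).Walk v y := q.toDeleteEdges _
              (fun e he => by
                simp only [Set.mem_singleton_iff]
                rintro rfl
                exact hp.2 (q.fst_mem_support_of_mem_edges he))
            exact hbxv ⟨w1.append w2.reverse⟩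
          have hv : v ∈ p''.support := Walk.snd_mem_support_of_mem_edges _ hkey
          exact ⟨v, hsupp ▸ hv, rfl⟩
    have h0 : 0 ∉ {n | ∃ c : V → Fin n, IsRVDColoring G c} := by
      rintro ⟨c, -⟩
      obtain ⟨x⟩ : Nonempty V := Fintype.card_pos_iff.mp (by omega)
      exact (c x).elim0
    refine le_antisymm (Nat.sInf_le h1) ?_
    rw [Nat.one_le_iff_ne_zero]
    intro hz
    rcases Nat.sInf_eq_zero.mp hz with h | h
    · exact h0 h
    · rw [h] at h1; exact h1
end

section
/- For every cycle C_n of order n ≥ 3, rvd(C_n) = 2. -/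
open SimpleGraph

variable {V : Type*}

section RVDCycleAux

private lemma fin_sub_val {n : ℕ} (a b : Fin n) :
    (a - b).val = if b.val ≤ a.val then a.val - b.val else a.val + n - b.val := by
  have ha := a.is_lt
  have hb := b.is_lt
  rw [Fin.sub_def]
  show ((n - b.val) + a.val) % n = _
  split
  · have h : (n - b.val) + a.val = n + (a.val - b.val) := by omega
    rw [h, Nat.add_mod_left, Nat.mod_eq_of_lt (by omega)]
  · rw [Nat.mod_eq_of_lt (by omega)]
    omega

private lemma fin_sub_val_eq_one {n : ℕ} (hn : 3 ≤ n) (a b : Fin n) :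
    (a - b).val = 1 ↔ (a.val = b.val + 1 ∨ (a.val = 0 ∧ b.val = n - 1)) := by
  have ha := a.is_lt
  have hb := b.is_lt
  rw [fin_sub_val]
  split <;> constructor <;> intro h1 <;> omega

private lemma cycle_adj_iff {n : ℕ} (hn : 3 ≤ n) (x u v : Fin n) :
    (SimpleGraph.cycleGraph n).Adj u v ↔
      ((u - x).val = (v - x).val + 1 ∨ ((u - x).val = 0 ∧ (v - x).val = n - 1) ∨
       (v - x).val = (u - x).val + 1 ∨ ((v - x).val = 0 ∧ (u - x).val = n - 1)) := by
  haveI : NeZero n := ⟨by omega⟩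
  rw [SimpleGraph.cycleGraph_adj']
  have h1 : u - v = (u - x) - (v - x) := (sub_sub_sub_cancel_right u v x).symm
  have h2 : v - u = (v - x) - (u - x) := (sub_sub_sub_cancel_right v u x).symm
  rw [h1, h2, fin_sub_val_eq_one hn, fin_sub_val_eq_one hn]
  tauto

private lemma sub_val_inj {n : ℕ} (hn : 3 ≤ n) {u v x : Fin n}
    (h : (u - x).val = (v - x).val) : u = v := by
  haveI : NeZero n := ⟨by omega⟩
  have h' : u - x = v - x := Fin.ext h
  have := congrArg (· + x) h'
  simpa [sub_add_cancel] using this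

private lemma exists_sub_val {n : ℕ} (hn : 3 ≤ n) (x : Fin n) (k : ℕ) (hk : k < n) :
    ∃ v : Fin n, (v - x).val = k := by
  haveI : NeZero n := ⟨by omega⟩
  exact ⟨x + ⟨k, hk⟩, by rw [add_sub_cancel_left]⟩

private lemma injOn_pair {α β : Type*} {c : α → β} {a b : α} (h : c a ≠ c b) :
    Set.InjOn c {a, b} := by
  intro u hu v hv huv
  simp only [Set.mem_insert_iff, Set.mem_singleton_iff] at hu hv
  rcases hu with rfl | rfl <;> rcases hv with rfl | rfl
  · rfl
  · exact absurd huv h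
  · exact absurd huv.symm h
  · rfl

end RVDCycleAux

open SimpleGraph in
private lemma cut_of_boundary {W : Type*} {G' : SimpleGraph W} {x y : W} (A S : Set W)
    (hx : x ∈ A) (hy : y ∉ A)
    (hb : ∀ u v : W, G'.Adj u v → u ∈ A → v ∉ A → v ∈ S)
    (p : G'.Walk x y) : ∃ v ∈ p.support, v ∈ S := by
  obtain ⟨d, hd, h1, h2⟩ := p.exists_boundary_dart A hx hy
  exact ⟨d.snd, p.dart_snd_mem_support_of_mem_darts hd, hb _ _ d.adj h1 h2⟩

open SimpleGraph in
private lemma swap_clause {W : Type*} {α : Type*} {G : SimpleGraph W} {c : W → α} {x y : W}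
    (h : ∃ S : Set W, x ∉ S ∧ y ∉ S ∧
      (∀ p : (G.deleteEdges {s(x, y)}).Walk x y, ∃ v ∈ p.support, v ∈ S) ∧
      (G.Adj x y → Set.InjOn c (insert x S) ∨ Set.InjOn c (insert y S)) ∧
      (¬ G.Adj x y → Set.InjOn c S)) :
    ∃ S : Set W, y ∉ S ∧ x ∉ S ∧
      (∀ p : (G.deleteEdges {s(y, x)}).Walk y x, ∃ v ∈ p.support, v ∈ S) ∧
      (G.Adj y x → Set.InjOn c (insert y S) ∨ Set.InjOn c (insert x S)) ∧
      (¬ G.Adj y x → Set.InjOn c S) := by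
  obtain ⟨S, h1, h2, h3, h4, h5⟩ := h
  have hE : G.deleteEdges {s(y, x)} = G.deleteEdges {s(x, y)} := by rw [Sym2.eq_swap]
  refine ⟨S, h2, h1, ?_, fun h => (h4 h.symm).symm, fun h => h5 fun a => h a.symm⟩
  intro p
  have hsub : ∀ e ∈ p.reverse.edges, e ∈ (G.deleteEdges {s(x, y)}).edgeSet := by
    intro e he
    rw [← hE]
    exact p.reverse.edges_subset_edgeSet he
  obtain ⟨v, hv, hvS⟩ := h3 (p.reverse.transfer _ hsub)
  rw [Walk.support_transfer, Walk.support_reverse, List.mem_reverse] at hv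
  exact ⟨v, hv, hvS⟩

private def cyc2col (n : ℕ) : Fin n → Fin 2 := fun v => if v.val ≤ 1 then 1 else 0

open SimpleGraph in
private lemma good_adj {n : ℕ} (hn : 3 ≤ n) (x y : Fin n) (hky : (y - x).val = 1) :
    ∃ S : Set (Fin n), x ∉ S ∧ y ∉ S ∧
      (∀ p : ((cycleGraph n).deleteEdges {s(x, y)}).Walk x y, ∃ v ∈ p.support, v ∈ S) ∧
      ((cycleGraph n).Adj x y →
        Set.InjOn (cyc2col n) (insert x S) ∨ Set.InjOn (cyc2col n) (insert y S)) ∧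
      (¬ (cycleGraph n).Adj x y → Set.InjOn (cyc2col n) S) := by
  haveI : NeZero n := ⟨by omega⟩
  have hxx : (x - x).val = 0 := by simp
  have hAdj : (cycleGraph n).Adj x y := by
    rw [cycle_adj_iff hn x]
    omega
  -- choose the cut vertex a
  obtain ⟨a, hax, hay, hcol⟩ : ∃ a : Fin n, a ≠ x ∧ a ≠ y ∧
      (cyc2col n a ≠ cyc2col n x ∨ cyc2col n a ≠ cyc2col n y) := by
    by_cases hcxy : cyc2col n x = cyc2col n y
    · by_cases hx1 : x.val ≤ 1
      · have hy1 : y.val ≤ 1 := by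
          by_contra hy1
          simp only [cyc2col, if_pos hx1, if_neg hy1] at hcxy
          exact absurd hcxy (by decide)
        refine ⟨⟨2, by omega⟩, ?_, ?_, Or.inl ?_⟩
        · intro h; rw [Fin.ext_iff] at h; simp at h; omega
        · intro h; rw [Fin.ext_iff] at h; simp at h; omega
        · simp only [cyc2col, if_pos hx1]
          norm_num
      · have hy1 : ¬ y.val ≤ 1 := by
          by_contra hy1
          simp only [cyc2col, if_neg hx1, if_pos hy1] at hcxy
          exact absurd hcxy (by decide)
        refine ⟨⟨0, by omega⟩, ?_, ?_, Or.inl ?_⟩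
        · intro h; rw [Fin.ext_iff] at h; simp at h; omega
        · intro h; rw [Fin.ext_iff] at h; simp at h; omega
        · simp only [cyc2col]
          rw [if_pos (by simp), if_neg hx1]
          norm_num
    · obtain ⟨a, ha⟩ := exists_sub_val hn x 2 (by omega)
      refine ⟨a, ?_, ?_, ?_⟩
      · intro h; rw [h, hxx] at ha; omega
      · intro h; rw [h, hky] at ha; omega
      · by_contra hc
        push_neg at hc
        exact hcxy (hc.1 ▸ hc.2)
  have hka : 2 ≤ (a - x).val := by
    have h0 : (a - x).val ≠ 0 := fun h => hax (sub_val_inj hn (by rw [h, hxx]))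
    have h1 : (a - x).val ≠ 1 := fun h => hay (sub_val_inj hn (by rw [h, hky]))
    omega
  have hkan := (a - x).is_lt
  have hxa : x ≠ a := hax.symm
  have hya : y ≠ a := hay.symm
  refine ⟨{a}, by simpa using hxa, by simpa using hya, ?_, ?_, fun h => absurd hAdj h⟩
  · -- the cut
    intro p
    refine cut_of_boundary {v : Fin n | (v - x).val = 0 ∨ (a - x).val < (v - x).val} {a}
      (by simp [hxx]) (by simp only [Set.mem_setOf_eq, hky]; omega) ?_ p
    intro u v hadj huA hvA
    rw [deleteEdges_adj] at hadj
    obtain ⟨hadj', hne⟩ := hadj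
    rw [cycle_adj_iff hn x] at hadj'
    simp only [Set.mem_setOf_eq] at huA hvA
    push_neg at hvA
    have hiu := (u - x).is_lt
    have hiv := (v - x).is_lt
    have key : (v - x).val = (a - x).val ∨ ((u - x).val = 0 ∧ (v - x).val = 1) := by omega
    rcases key with h | ⟨h1, h2⟩
    · simp [sub_val_inj hn h]
    · have hux : u = x := sub_val_inj hn (by rw [h1, hxx])
      have hvy : v = y := sub_val_inj hn (by rw [h2, hky])
      subst hux; subst hvy
      exact absurd rfl hne
  · intro _
    rcases hcol with h | h
    · exact Or.inl (injOn_pair (Ne.symm h))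
    · exact Or.inr (injOn_pair (Ne.symm h))

open SimpleGraph in
private lemma good_nonadj {n : ℕ} (hn : 3 ≤ n) (x y : Fin n)
    (hky2 : 2 ≤ (y - x).val) (hky2' : (y - x).val ≤ n - 2) :
    ∃ S : Set (Fin n), x ∉ S ∧ y ∉ S ∧
      (∀ p : ((cycleGraph n).deleteEdges {s(x, y)}).Walk x y, ∃ v ∈ p.support, v ∈ S) ∧
      ((cycleGraph n).Adj x y →
        Set.InjOn (cyc2col n) (insert x S) ∨ Set.InjOn (cyc2col n) (insert y S)) ∧
      (¬ (cycleGraph n).Adj x y → Set.InjOn (cyc2col n) S) := by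
  haveI : NeZero n := ⟨by omega⟩
  have hxx : (x - x).val = 0 := by simp
  have hnAdj : ¬ (cycleGraph n).Adj x y := by
    rw [cycle_adj_iff hn x]
    omega
  -- no edge between the interiors of the two arcs
  have noedge : ∀ u w : Fin n, 0 < (u - x).val → (u - x).val < (y - x).val →
      (y - x).val < (w - x).val → ¬ (cycleGraph n).Adj u w := by
    intro u w h1 h2 h3 hA
    rw [cycle_adj_iff hn x] at hA
    have := (w - x).is_lt
    omega
  -- vertices of small value are mutually adjacent
  have adj01 : ∀ u v : Fin n, u.val ≤ 1 → v.val ≤ 1 → u ≠ v → (cycleGraph n).Adj u v := by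
    intro u v hu hv huv
    have hne : u.val ≠ v.val := fun h => huv (Fin.ext h)
    rw [cycle_adj_iff hn ⟨0, by omega⟩]
    have e1 : (u - ⟨0, by omega⟩).val = u.val := by rw [fin_sub_val]; simp
    have e2 : (v - ⟨0, by omega⟩).val = v.val := by rw [fin_sub_val]; simp
    rw [e1, e2]
    omega
  -- choose the special small-valued vertex t
  have esub := fin_sub_val y x
  obtain ⟨t, ht1, htx, hty⟩ : ∃ t : Fin n, t.val ≤ 1 ∧ t ≠ x ∧ t ≠ y := by
    by_cases h0 : x.val = 0 ∨ y.val = 0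
    · refine ⟨⟨1, by omega⟩, by simp, fun h => ?_, fun h => ?_⟩
      · have hx1 : x.val = 1 := by rw [← h]
        have hy0 : y.val = 0 := by omega
        rw [if_neg (by omega)] at esub
        omega
      · have hy1 : y.val = 1 := by rw [← h]
        have hx0 : x.val = 0 := by omega
        rw [if_pos (by omega)] at esub
        omega
    · push_neg at h0
      refine ⟨⟨0, by omega⟩, by simp, fun h => ?_, fun h => ?_⟩
      · exact h0.1 (by rw [← h])
      · exact h0.2 (by rw [← h])
  have hts : (t - x).val ≠ 0 := fun h => htx (sub_val_inj hn (by rw [h, hxx]))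
  have htky : (t - x).val ≠ (y - x).val := fun h => hty (sub_val_inj hn h)
  have htn := (t - x).is_lt
  -- find a, b in the two arc interiors with different colors
  obtain ⟨a, b, ha1, hab, hb1, hcab⟩ : ∃ a b : Fin n,
      0 < (a - x).val ∧ (a - x).val < (y - x).val ∧ (y - x).val < (b - x).val ∧
      cyc2col n a ≠ cyc2col n b := by
    rcases lt_or_gt_of_ne htky with hlt | hgt
    · -- t is in the first arc
      obtain ⟨b, hb1, hb2⟩ : ∃ b : Fin n, (y - x).val < (b - x).val ∧ 2 ≤ b.val := by
        by_contra hcon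
        push_neg at hcon
        obtain ⟨w0, hw0⟩ := exists_sub_val hn x ((y - x).val + 1) (by omega)
        have hw0v : w0.val ≤ 1 := by
          have := hcon w0 (by omega)
          omega
        have hne : t ≠ w0 := fun h => by rw [h, hw0] at hlt; omega
        exact noedge t w0 (by omega) hlt (by omega) (adj01 t w0 ht1 hw0v hne)
      refine ⟨t, b, by omega, hlt, hb1, ?_⟩
      simp only [cyc2col, if_pos ht1, if_neg (by omega : ¬ b.val ≤ 1)]
      decide
    · -- t is in the second arc
      obtain ⟨a, ha1, ha2⟩ : ∃ a : Fin n, 0 < (a - x).val ∧ (a - x).val < (y - x).val ∧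
          2 ≤ a.val := by
        by_contra hcon
        push_neg at hcon
        obtain ⟨w0, hw0⟩ := exists_sub_val hn x 1 (by omega)
        have hw0v : w0.val ≤ 1 := by
          have := hcon w0 (by omega) (by omega)
          omega
        have hne : w0 ≠ t := fun h => by rw [← h, hw0] at hgt; omega
        exact noedge w0 t (by omega) (by omega) hgt (adj01 w0 t hw0v ht1 hne)
      refine ⟨a, t, ha1, ha2.1, hgt, ?_⟩
      simp only [cyc2col, if_neg (by omega : ¬ a.val ≤ 1), if_pos ht1]
      decide
  have hbn := (b - x).is_lt
  have hax : x ≠ a := fun h => by rw [← h, hxx] at ha1; omega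
  have hbx : x ≠ b := fun h => by rw [← h, hxx] at hb1; omega
  have hay : y ≠ a := fun h => by rw [← h] at hab; omega
  have hby : y ≠ b := fun h => by rw [← h] at hb1; omega
  refine ⟨{a, b}, ?_, ?_, ?_, fun h => absurd h hnAdj, fun _ => injOn_pair hcab⟩
  · simp only [Set.mem_insert_iff, Set.mem_singleton_iff]
    push_neg
    exact ⟨hax, hbx⟩
  · simp only [Set.mem_insert_iff, Set.mem_singleton_iff]
    push_neg
    exact ⟨hay, hby⟩
  · intro p
    refine cut_of_boundary
      {v : Fin n | (v - x).val < (a - x).val ∨ (b - x).val < (v - x).val} {a, b}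
      (by simp only [Set.mem_setOf_eq, hxx]; omega)
      (by simp only [Set.mem_setOf_eq]; omega) ?_ p
    intro u v hadj huA hvA
    rw [deleteEdges_adj] at hadj
    have hadj' := hadj.1
    rw [cycle_adj_iff hn x] at hadj'
    simp only [Set.mem_setOf_eq] at huA hvA
    push_neg at hvA
    have hiu := (u - x).is_lt
    have hiv := (v - x).is_lt
    have key : (v - x).val = (a - x).val ∨ (v - x).val = (b - x).val := by omega
    rcases key with h | h
    · simp [sub_val_inj hn h]
    · simp [sub_val_inj hn h]

open SimpleGraph in
private lemma walk_descend {n : ℕ} (hn : 3 ≤ n) (k : ℕ) :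
    ∀ (hk : k < n), 1 ≤ k →
      Nonempty (((cycleGraph n).deleteEdges
        {s((⟨0, by omega⟩ : Fin n), ⟨1, by omega⟩)}).Walk ⟨k, hk⟩ ⟨1, by omega⟩) := by
  induction k with
  | zero => intro _ h; omega
  | succ k ih =>
    intro hk hk1
    rcases Nat.eq_or_lt_of_le hk1 with h | h
    · have hk0 : k = 0 := by omega
      subst hk0
      exact ⟨Walk.nil⟩
    · obtain ⟨w⟩ := ih (by omega) (by omega)
      refine ⟨Walk.cons ?_ w⟩
      rw [deleteEdges_adj]
      constructor
      · rw [cycleGraph_adj']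
        left
        rw [fin_sub_val]
        simp
      · simp only [Set.mem_singleton_iff, Sym2.eq, Sym2.rel_iff', Prod.mk.injEq,
          Prod.swap_prod_mk, Fin.mk.injEq]
        push_neg
        constructor
        · intro h'; omega
        · intro h'; omega

open SimpleGraph in
private lemma walk01 {n : ℕ} (hn : 3 ≤ n) :
    Nonempty (((cycleGraph n).deleteEdges
      {s((⟨0, by omega⟩ : Fin n), ⟨1, by omega⟩)}).Walk ⟨0, by omega⟩ ⟨1, by omega⟩) := by
  obtain ⟨w⟩ := walk_descend hn (n - 1) (by omega) (by omega)
  refine ⟨Walk.cons ?_ w⟩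
  rw [deleteEdges_adj]
  constructor
  · rw [cycleGraph_adj']
    left
    rw [fin_sub_val]
    simp only
    rw [if_neg (by simp; omega)]
    simp
    omega
  · simp only [Set.mem_singleton_iff, Sym2.eq, Sym2.rel_iff', Prod.mk.injEq,
      Prod.swap_prod_mk, Fin.mk.injEq]
    push_neg
    constructor
    · intro h'; omega
    · intro h'; omega

/-- For every cycle `C_n` of order `n ≥ 3`, `rvd(C_n) = 2`. -/
theorem rvd_cycleGraph (n : ℕ) (hn : 3 ≤ n) :
    rvd (SimpleGraph.cycleGraph n) = 2 := by
  haveI : NeZero n := ⟨by omega⟩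
  have hmem : 2 ∈ {m | ∃ c : Fin n → Fin m, IsRVDColoring (SimpleGraph.cycleGraph n) c} := by
    refine ⟨cyc2col n, ?_⟩
    intro x y hxy
    have hyn := (y - x).is_lt
    have hxn := (x - y).is_lt
    have hky0 : (y - x).val ≠ 0 := by
      intro h
      exact hxy (sub_val_inj hn (by rw [h]; simp)).symm
    by_cases h1 : (y - x).val = 1
    · exact good_adj hn x y h1
    by_cases h2 : (x - y).val = 1
    · exact swap_clause (good_adj hn y x h2)
    have hvne : x.val ≠ y.val := fun h => hxy (Fin.ext h)
    have hsum : (y - x).val + (x - y).val = n := by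
      rw [fin_sub_val, fin_sub_val]
      have := x.is_lt
      have := y.is_lt
      split <;> split <;> omega
    exact good_nonadj hn x y (by omega) (by omega)
  have hlb : ∀ m ∈ {m | ∃ c : Fin n → Fin m, IsRVDColoring (SimpleGraph.cycleGraph n) c},
      2 ≤ m := by
    intro m hm
    by_contra hlt
    push_neg at hlt
    obtain ⟨c, hc⟩ := hm
    interval_cases m
    · exact (c ⟨0, by omega⟩).elim0
    · obtain ⟨S, hxS, hyS, hcut, hadjS, _⟩ :=
        hc ⟨0, by omega⟩ ⟨1, by omega⟩ (by simp [Fin.ext_iff])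
      have hA : (SimpleGraph.cycleGraph n).Adj ⟨0, by omega⟩ ⟨1, by omega⟩ := by
        rw [SimpleGraph.cycleGraph_adj']
        right
        rw [fin_sub_val]
        simp
      obtain ⟨w⟩ := walk01 hn
      obtain ⟨v, _, hvS⟩ := hcut w
      rcases hadjS hA with h | h
      · have he := h (Set.mem_insert _ _) (Set.mem_insert_of_mem _ hvS)
          (Subsingleton.elim _ _)
        rw [he] at hxS
        exact hxS hvS
      · have he := h (Set.mem_insert _ _) (Set.mem_insert_of_mem _ hvS)
          (Subsingleton.elim _ _)
        rw [he] at hyS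
        exact hyS hvS
  exact le_antisymm (Nat.sInf_le hmem) (le_csInf ⟨2, hmem⟩ hlb)
end

section
/- Let G be a nontrivial connected graph, and let B be a block of G such that rvd(B) is maximum among all blocks of G. Then rvd(G) = rvd(B). -/
open SimpleGraph

variable {V : Type*}

-- EX
lemma exists_rvd_coloring {U : Type*} [Fintype U] (H : SimpleGraph U) :
    ∃ c : U → Fin (Fintype.card U), IsRVDColoring H c := by
  refine ⟨Fintype.equivFin U, ?_⟩
  have hinj : Function.Injective (Fintype.equivFin U) := (Fintype.equivFin U).injective
  intro x y hxy
  refine ⟨{x, y}ᶜ, by simp, by simp, ?_, fun _ => Or.inl hinj.injOn, fun _ => hinj.injOn⟩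
  intro p
  cases p with
  | nil => exact absurd rfl hxy
  | @cons _ b _ h q =>
    refine ⟨b, by simp [Walk.support_cons, q.start_mem_support], ?_⟩
    rw [deleteEdges_adj] at h
    simp only [Set.mem_compl_iff, Set.mem_insert_iff, Set.mem_singleton_iff, not_or]
    exact ⟨fun hb => h.1.ne hb.symm, fun hb => h.2 (by rw [hb]; rfl)⟩

-- INJ
lemma IsRVDColoring.comp {U α β : Type*} {H : SimpleGraph U} {c : U → α}
    (hc : IsRVDColoring H c) {f : α → β} (hf : Function.Injective f) :
    IsRVDColoring H (f ∘ c) := by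
  intro x y hxy
  obtain ⟨S, h1, h2, h3, h4, h5⟩ := hc x y hxy
  have key : ∀ T : Set U, Set.InjOn c T → Set.InjOn (f ∘ c) T :=
    fun T hI a ha b hb h => hI ha hb (hf h)
  exact ⟨S, h1, h2, h3, fun ha => (h4 ha).imp (key _) (key _), fun hna => key _ (h5 hna)⟩

-- GETC
lemma exists_coloring_of_rvd_le {U : Type*} [Fintype U] (H : SimpleGraph U) {k : ℕ}
    (h : rvd H ≤ k) : ∃ c : U → Fin k, IsRVDColoring H c := by
  have hne : {n | ∃ c : U → Fin n, IsRVDColoring H c}.Nonempty := ⟨_, exists_rvd_coloring H⟩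
  obtain ⟨c, hc⟩ := Nat.sInf_mem hne
  exact ⟨Fin.castLE h ∘ c, hc.comp (Fin.castLE_injective h)⟩

-- M
lemma rvd_le_of_embedding {U W : Type*} [Fintype W] {H : SimpleGraph U} {G' : SimpleGraph W}
    (e : H ↪g G') : rvd H ≤ rvd G' := by
  obtain ⟨c, hc⟩ := exists_coloring_of_rvd_le G' le_rfl
  refine Nat.sInf_le ⟨c ∘ e, ?_⟩
  intro x y hxy
  obtain ⟨S, hx, hy, hcut, hadj, hnadj⟩ := hc (e x) (e y) (fun h => hxy (e.injective h))
  have key : ∀ (T : Set W) (T' : Set U), (∀ v ∈ T', e v ∈ T) → Set.InjOn c T →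
      Set.InjOn (c ∘ e) T' :=
    fun T T' hm hI a ha b hb hcc => e.injective (hI (hm a ha) (hm b hb) hcc)
  refine ⟨(⇑e) ⁻¹' S, hx, hy, ?_, ?_, ?_⟩
  · intro p
    have hf : ∀ a b, (H.deleteEdges {s(x, y)}).Adj a b →
        (G'.deleteEdges {s(e x, e y)}).Adj (e a) (e b) := by
      intro a b hab
      rw [deleteEdges_adj] at hab ⊢
      refine ⟨e.map_rel_iff.mpr hab.1, ?_⟩
      intro hmem
      apply hab.2
      rw [Set.mem_singleton_iff, Sym2.eq_iff] at hmem ⊢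
      rcases hmem with ⟨h1, h2⟩ | ⟨h1, h2⟩
      · exact Or.inl ⟨e.injective h1, e.injective h2⟩
      · exact Or.inr ⟨e.injective h1, e.injective h2⟩
    obtain ⟨v, hv, hvS⟩ := hcut (p.map ⟨⇑e, fun {a b} h => hf a b h⟩)
    rw [Walk.support_map, List.mem_map] at hv
    obtain ⟨a, ha, rfl⟩ := hv
    exact ⟨a, ha, hvS⟩
  · intro h
    refine (hadj (e.map_rel_iff.mpr h)).imp (key _ _ ?_) (key _ _ ?_) <;>
      · rintro v (rfl | hv)
        · exact Set.mem_insert _ _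
        · exact Set.mem_insert_of_mem _ hv
  · intro h
    exact key _ _ (fun v hv => hv) (hnadj (fun h' => h (e.map_rel_iff.mp h')))

-- absorption
lemma IsBlock.adj_of_adj {G : SimpleGraph V} {B : G.Subgraph} (hB : IsBlock G B) {x y : V}
    (hx : x ∈ B.verts) (hy : y ∈ B.verts) (hxy : G.Adj x y) : B.Adj x y := by
  let H' : G.Subgraph :=
    { verts := B.verts
      Adj := fun a b => B.Adj a b ∨ (a = x ∧ b = y) ∨ (a = y ∧ b = x)
      adj_sub := by
        rintro a b (h | ⟨rfl, rfl⟩ | ⟨rfl, rfl⟩)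
        · exact B.adj_sub h
        · exact hxy
        · exact hxy.symm
      edge_vert := by
        rintro a b (h | ⟨rfl, -⟩ | ⟨rfl, -⟩)
        · exact B.edge_vert h
        · exact hx
        · exact hy
      symm := by
        constructor
        rintro a b (h | h | h)
        · exact Or.inl (B.adj_symm h)
        · exact Or.inr (Or.inr ⟨h.2, h.1⟩)
        · exact Or.inr (Or.inl ⟨h.2, h.1⟩) }
  have hle : B ≤ H' := ⟨subset_rfl, fun {a b} h => Or.inl h⟩
  have hcoe_le : B.coe ≤ H'.coe := fun {a b} h => Or.inl h
  have hconn : H'.coe.Connected := hB.1.mono hcoe_le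
  have hnocut : HasNoCutVertex H'.coe := by
    intro w a b
    refine ((hB.2.1 w) a b).mono ?_
    intro p q hpq
    exact hcoe_le hpq
  have heq : H' = B := hB.2.2 H' hle hconn hnocut
  have hadj : H'.Adj x y := Or.inr (Or.inl ⟨rfl, rfl⟩)
  rwa [heq] at hadj

-- W2
lemma walk_mem_of_cross {U : Type*} {H : SimpleGraph U} {P : Set U} {w : U}
    (hcr : ∀ a b, H.Adj a b → a ∈ P → b ∉ P → a = w) :
    ∀ {x y : U} (p : H.Walk x y), x ∉ P → y ∈ P → w ∈ p.support := by
  intro x y p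
  induction p with
  | nil => intro hx hy; exact absurd hy hx
  | @cons a b _ h q ih =>
    intro hx hy
    by_cases hb : b ∈ P
    · have : b = w := hcr b a h.symm hb hx
      rw [Walk.support_cons]
      exact this ▸ List.mem_cons_of_mem _ q.start_mem_support
    · rw [Walk.support_cons]
      exact List.mem_cons_of_mem _ (ih hb hy)

-- surgery
lemma walk_surgery {U : Type*} {H : SimpleGraph U} {P : Set U} {w : U}
    (hcr : ∀ a b, H.Adj a b → a ∈ P → b ∉ P → a = w) (hw : w ∈ P) :
    ∀ (n : ℕ) {x y : U}, x ∈ P → y ∈ P → ∀ p : H.Walk x y, p.length ≤ n →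
      ∃ q : H.Walk x y, (∀ v ∈ q.support, v ∈ P) ∧ (∀ v ∈ q.support, v ∈ p.support) := by
  classical
  intro n
  induction n with
  | zero =>
    intro x y hx hy p hl
    cases p with
    | nil =>
      refine ⟨Walk.nil, ?_, fun v hv => hv⟩
      intro v hv
      rw [Walk.support_nil, List.mem_singleton] at hv
      exact hv ▸ hx
    | cons h q => simp [Walk.length_cons] at hl
  | succ n ih =>
    intro x y hx hy p hl
    cases p with
    | nil =>
      refine ⟨Walk.nil, ?_, fun v hv => hv⟩
      intro v hv
      rw [Walk.support_nil, List.mem_singleton] at hv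
      exact hv ▸ hx
    | @cons _ b _ h q =>
      rw [Walk.length_cons, Nat.succ_le_succ_iff] at hl
      by_cases hb : b ∈ P
      · obtain ⟨r, hr1, hr2⟩ := ih hb hy q hl
        refine ⟨Walk.cons h r, ?_, ?_⟩
        · intro v hv
          rw [Walk.support_cons] at hv
          rcases List.mem_cons.mp hv with rfl | hv
          · exact hx
          · exact hr1 v hv
        · intro v hv
          rw [Walk.support_cons] at hv ⊢
          rcases List.mem_cons.mp hv with rfl | hv
          · exact List.mem_cons_self
          · exact List.mem_cons_of_mem _ (hr2 v hv)
      · have hxw : x = w := hcr x b h hx hb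
        subst hxw
        have hwq : x ∈ q.support := walk_mem_of_cross hcr q hb hy
        obtain ⟨r, hr1, hr2⟩ := ih hw hy (q.dropUntil x hwq)
          (le_trans (Walk.length_dropUntil_le q hwq) hl)
        refine ⟨r, hr1, ?_⟩
        intro v hv
        rw [Walk.support_cons]
        exact List.mem_cons_of_mem _ (Walk.support_dropUntil_subset q hwq (hr2 v hv))

-- reach transfer
lemma reach_transfer (G : SimpleGraph V) {T T' : Set V} :
    ∀ {a b : ↥T} (p : (G.induce T).Walk a b), (∀ v ∈ p.support, (v : V) ∈ T') →
      ∀ (ha : ↑a ∈ T') (hb : ↑b ∈ T'),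
      (G.induce T').Reachable ⟨a, ha⟩ ⟨b, hb⟩ := by
  intro a b p
  induction p with
  | nil =>
    intro _ ha hb
    exact Reachable.refl _
  | @cons u s _ h q ih =>
    intro hsup ha hb
    have hs : (s : V) ∈ T' := by
      refine hsup s ?_
      rw [Walk.support_cons]
      exact List.mem_cons_of_mem _ q.start_mem_support
    have hadj : (G.induce T').Adj ⟨u, ha⟩ ⟨s, hs⟩ := h
    refine hadj.reachable.trans (ih ?_ hs hb)
    intro v hv
    refine hsup v ?_
    rw [Walk.support_cons]
    exact List.mem_cons_of_mem _ hv

-- key cut lemma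
lemma key_cut (G : SimpleGraph V) {A A1 : Set V} (hsub : A1 ⊆ A) {w₀ : V} (hw : w₀ ∈ A1)
    (hbd : ∀ a b, G.Adj a b → a ∈ A1 → b ∈ A → b ∉ A1 → a = w₀)
    {k : ℕ} {c : ↥A → Fin k} {c1 : ↥A1 → Fin k}
    (hagree : ∀ a (h : a ∈ A1), c ⟨a, hsub h⟩ = c1 ⟨a, h⟩)
    (hc1 : IsRVDColoring (G.induce A1) c1)
    {x y : V} (hx : x ∈ A1) (hy : y ∈ A1) (hxy : x ≠ y) :
    ∃ S : Set ↥A, (⟨x, hsub hx⟩ : ↥A) ∉ S ∧ (⟨y, hsub hy⟩ : ↥A) ∉ S ∧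
      (∀ p : ((G.induce A).deleteEdges
          {s((⟨x, hsub hx⟩ : ↥A), (⟨y, hsub hy⟩ : ↥A))}).Walk ⟨x, hsub hx⟩ ⟨y, hsub hy⟩,
        ∃ v ∈ p.support, v ∈ S) ∧
      ((G.induce A).Adj ⟨x, hsub hx⟩ ⟨y, hsub hy⟩ →
        Set.InjOn c (insert ⟨x, hsub hx⟩ S) ∨ Set.InjOn c (insert ⟨y, hsub hy⟩ S)) ∧
      (¬ (G.induce A).Adj ⟨x, hsub hx⟩ ⟨y, hsub hy⟩ → Set.InjOn c S) := by
  set x₁ : ↥A1 := ⟨x, hx⟩ with hx₁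
  set y₁ : ↥A1 := ⟨y, hy⟩ with hy₁
  set xA : ↥A := ⟨x, hsub hx⟩ with hxA
  set yA : ↥A := ⟨y, hsub hy⟩ with hyA
  obtain ⟨S1, hS1x, hS1y, hS1cut, hS1adj, hS1nadj⟩ := hc1 x₁ y₁ (fun h => hxy (congrArg Subtype.val h))
  set S : Set ↥A := {v : ↥A | ∃ h : (v : V) ∈ A1, (⟨v, h⟩ : ↥A1) ∈ S1} with hS
  have hxS : xA ∉ S := by
    rintro ⟨h, hmem⟩
    exact hS1x hmem
  have hyS : yA ∉ S := by
    rintro ⟨h, hmem⟩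
    exact hS1y hmem
  -- injectivity transfer
  have inj_transfer : ∀ (T1 : Set ↥A1) (T : Set ↥A),
      (∀ v : ↥A, v ∈ T → ∃ h : (v : V) ∈ A1, (⟨v, h⟩ : ↥A1) ∈ T1) →
      Set.InjOn c1 T1 → Set.InjOn c T := by
    intro T1 T hmap hI a ha b hb heq
    obtain ⟨ha1, ha1'⟩ := hmap a ha
    obtain ⟨hb1, hb1'⟩ := hmap b hb
    have : c1 ⟨a, ha1⟩ = c1 ⟨b, hb1⟩ := by
      rw [← hagree _ ha1, ← hagree _ hb1]
      exact heq
    have hv : ((⟨(a : V), ha1⟩ : ↥A1) : V) = ((⟨(b : V), hb1⟩ : ↥A1) : V) :=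
      congrArg Subtype.val (hI ha1' hb1' this)
    exact Subtype.ext hv
  refine ⟨S, hxS, hyS, ?_, ?_, ?_⟩
  · -- cut condition
    intro p
    have hcrd : ∀ a b : ↥A, ((G.induce A).deleteEdges {s(xA, yA)}).Adj a b →
        a ∈ {v : ↥A | (v : V) ∈ A1} → b ∉ {v : ↥A | (v : V) ∈ A1} →
        a = (⟨w₀, hsub hw⟩ : ↥A) := by
      intro a b hab ha hb
      rw [deleteEdges_adj] at hab
      exact Subtype.ext (hbd a b hab.1 ha b.2 hb)
    obtain ⟨q, hq1, hq2⟩ := walk_surgery (P := {v : ↥A | (v : V) ∈ A1}) hcrd hw p.length hx hy p le_rfl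
    have proj : ∀ {a b : ↥A} (q₀ : ((G.induce A).deleteEdges {s(xA, yA)}).Walk a b),
        (∀ v ∈ q₀.support, (v : V) ∈ A1) →
        ∀ (ha : (a : V) ∈ A1) (hb : (b : V) ∈ A1),
        ∃ r : ((G.induce A1).deleteEdges {s(x₁, y₁)}).Walk ⟨a, ha⟩ ⟨b, hb⟩,
          ∀ z ∈ r.support, ∃ v ∈ q₀.support, (z : V) = (v : V) := by
      intro a b q₀
      induction q₀ with
      | nil =>
        intro _ ha hb
        refine ⟨Walk.nil, ?_⟩
        intro z hz
        rw [Walk.support_nil, List.mem_singleton] at hz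
        subst hz
        exact ⟨_, Walk.start_mem_support _, rfl⟩
      | @cons u s _ h q' ih =>
        intro hall ha hb
        have hs : (s : V) ∈ A1 := by
          refine hall s ?_
          rw [Walk.support_cons]
          exact List.mem_cons_of_mem _ q'.start_mem_support
        have hadj : ((G.induce A1).deleteEdges {s(x₁, y₁)}).Adj ⟨u, ha⟩ ⟨s, hs⟩ := by
          rw [deleteEdges_adj]
          rw [deleteEdges_adj] at h
          refine ⟨h.1, ?_⟩
          intro hmem
          apply h.2
          rw [Set.mem_singleton_iff, Sym2.eq_iff] at hmem ⊢
          rcases hmem with ⟨h1, h2⟩ | ⟨h1, h2⟩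
          · have h1' : (u : V) = x := congrArg Subtype.val h1
            have h2' : (s : V) = y := congrArg Subtype.val h2
            exact Or.inl ⟨Subtype.ext h1', Subtype.ext h2'⟩
          · have h1' : (u : V) = y := congrArg Subtype.val h1
            have h2' : (s : V) = x := congrArg Subtype.val h2
            exact Or.inr ⟨Subtype.ext h1', Subtype.ext h2'⟩
        obtain ⟨r, hr⟩ := ih (fun v hv => hall v (by
          rw [Walk.support_cons]; exact List.mem_cons_of_mem _ hv)) hs hb
        refine ⟨Walk.cons hadj r, ?_⟩
        intro z hz
        rw [Walk.support_cons] at hz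
        rcases List.mem_cons.mp hz with rfl | hz
        · exact ⟨u, by rw [Walk.support_cons]; exact List.mem_cons_self, rfl⟩
        · obtain ⟨v, hv, hve⟩ := hr z hz
          exact ⟨v, by rw [Walk.support_cons]; exact List.mem_cons_of_mem _ hv, hve⟩
    obtain ⟨r, hr⟩ := proj q hq1 hx hy
    obtain ⟨z, hzr, hzS1⟩ := hS1cut r
    obtain ⟨v, hvq, hzv⟩ := hr z hzr
    refine ⟨v, hq2 v hvq, ?_⟩
    refine ⟨hzv ▸ z.2, ?_⟩
    have hzeq : (⟨(v : V), hzv ▸ z.2⟩ : ↥A1) = z := Subtype.ext hzv.symm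
    rw [hzeq]
    exact hzS1
  · intro hadj
    have hadj1 : (G.induce A1).Adj x₁ y₁ := hadj
    refine (hS1adj hadj1).imp (inj_transfer _ _ ?_) (inj_transfer _ _ ?_)
    · rintro v (rfl | hv)
      · exact ⟨hx, Set.mem_insert _ _⟩
      · obtain ⟨h, hmem⟩ := hv
        exact ⟨h, Set.mem_insert_of_mem _ hmem⟩
    · rintro v (rfl | hv)
      · exact ⟨hy, Set.mem_insert _ _⟩
      · obtain ⟨h, hmem⟩ := hv
        exact ⟨h, Set.mem_insert_of_mem _ hmem⟩
  · intro hnadj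
    have hnadj1 : ¬ (G.induce A1).Adj x₁ y₁ := fun h => hnadj h
    exact inj_transfer _ _ (fun v hv => hv) (hS1nadj hnadj1)

-- main upper bound induction
lemma rvd_induce_le (G : SimpleGraph V) [Fintype V] (k : ℕ)
    (Hk : ∀ A : Set V, (G.induce A).Connected → HasNoCutVertex (G.induce A) →
      rvd (G.induce A) ≤ k) :
    ∀ (n : ℕ) (A : Set V), A.ncard = n → (G.induce A).Connected → rvd (G.induce A) ≤ k := by
  classical
  intro n
  induction n using Nat.strong_induction_on with
  | _ n IH =>
  intro A hcard hconnA
  by_cases hnc : HasNoCutVertex (G.induce A)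
  · exact Hk A hconnA hnc
  rw [HasNoCutVertex] at hnc
  push_neg at hnc
  obtain ⟨w, hw⟩ := hnc
  unfold SimpleGraph.Preconnected at hw
  push_neg at hw
  obtain ⟨uu, vv, hnr0⟩ := hw
  set w₀ : V := (w : V) with hw₀def
  have hw₀A : w₀ ∈ A := w.2
  set u₀ : V := ((uu : ↥A) : V) with hu₀def
  set v₀ : V := ((vv : ↥A) : V) with hv₀def
  have hu₀A : u₀ ∈ A := (uu : ↥A).2
  have hv₀A : v₀ ∈ A := (vv : ↥A).2
  have huw : (uu : ↥A) ≠ w := by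
    have := uu.2
    rwa [Set.mem_compl_singleton_iff] at this
  have hvw : (vv : ↥A) ≠ w := by
    have := vv.2
    rwa [Set.mem_compl_singleton_iff] at this
  have hu₀w : u₀ ≠ w₀ := fun h => huw (Subtype.ext h)
  have hv₀w : v₀ ≠ w₀ := fun h => hvw (Subtype.ext h)
  have hu' : u₀ ∈ A \ {w₀} := ⟨hu₀A, hu₀w⟩
  have hv' : v₀ ∈ A \ {w₀} := ⟨hv₀A, hv₀w⟩
  have hnr : ¬ (G.induce (A \ {w₀})).Reachable ⟨u₀, hu'⟩ ⟨v₀, hv'⟩ := by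
    intro hr
    apply hnr0
    let f : G.induce (A \ {w₀}) →g (G.induce A).induce ({w}ᶜ : Set ↥A) :=
      ⟨fun z => ⟨⟨z.1, z.2.1⟩, by
        rw [Set.mem_compl_singleton_iff]
        exact fun h => z.2.2 (congrArg Subtype.val h)⟩, fun {a b} h => h⟩
    have h2 := hr.map f
    have e1 : f ⟨u₀, hu'⟩ = uu := Subtype.ext (Subtype.ext rfl)
    have e2 : f ⟨v₀, hv'⟩ = vv := Subtype.ext (Subtype.ext rfl)
    rwa [e1, e2] at h2
  set A1 : Set V := insert w₀
    {a : V | ∃ h : a ∈ A \ {w₀}, (G.induce (A \ {w₀})).Reachable ⟨u₀, hu'⟩ ⟨a, h⟩} with hA1def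
  set A2 : Set V := insert w₀ (A \ A1) with hA2def
  have hA1A : A1 ⊆ A := by
    intro a ha
    rcases Set.mem_insert_iff.mp ha with rfl | ⟨h, -⟩
    · exact hw₀A
    · exact h.1
  have hA2A : A2 ⊆ A := by
    intro a ha
    rcases Set.mem_insert_iff.mp ha with rfl | ⟨h, -⟩
    · exact hw₀A
    · exact h
  have hw₀1 : w₀ ∈ A1 := Set.mem_insert _ _
  have hw₀2 : w₀ ∈ A2 := Set.mem_insert _ _
  have hu₀1 : u₀ ∈ A1 := Set.mem_insert_of_mem _ ⟨hu', Reachable.refl _⟩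
  have hv₀n1 : v₀ ∉ A1 := by
    intro h
    rcases Set.mem_insert_iff.mp h with h' | ⟨h', hr⟩
    · exact hv₀w h'
    · exact hnr hr
  have hv₀2 : v₀ ∈ A2 := Set.mem_insert_of_mem _ ⟨hv₀A, hv₀n1⟩
  have hu₀n2 : u₀ ∉ A2 := by
    intro h
    rcases Set.mem_insert_iff.mp h with h' | ⟨-, h'⟩
    · exact hu₀w h'
    · exact h' hu₀1
  have hA12 : ∀ a, a ∈ A → a ∉ A1 → a ∈ A2 := fun a ha h1 => Set.mem_insert_of_mem _ ⟨ha, h1⟩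
  have hcr1 : ∀ a b, G.Adj a b → a ∈ A1 → b ∈ A → b ∉ A1 → a = w₀ := by
    intro a b hab ha1 hbA hbn1
    rcases Set.mem_insert_iff.mp ha1 with rfl | ⟨ha', hra⟩
    · rfl
    · exfalso
      have hbw : b ≠ w₀ := fun h => hbn1 (h ▸ hw₀1)
      have hb' : b ∈ A \ {w₀} := ⟨hbA, hbw⟩
      have hadj : (G.induce (A \ {w₀})).Adj ⟨a, ha'⟩ ⟨b, hb'⟩ := hab
      exact hbn1 (Set.mem_insert_of_mem _ ⟨hb', hra.trans hadj.reachable⟩)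
  have hcr2 : ∀ a b, G.Adj a b → a ∈ A2 → b ∈ A → b ∉ A2 → a = w₀ := by
    intro a b hab ha2 hbA hbn2
    have hb1 : b ∈ A1 := by
      by_contra h
      exact hbn2 (hA12 b hbA h)
    have hbw : b ≠ w₀ := fun h => hbn2 (h ▸ hw₀2)
    rcases Set.mem_insert_iff.mp ha2 with rfl | ⟨haA', han1⟩
    · rfl
    · exact absurd (hcr1 b a hab.symm hb1 haA' han1) hbw
  have hreach1 : ∀ a (ha1 : a ∈ A1) (h : a ∈ A \ {w₀}),
      (G.induce (A \ {w₀})).Reachable ⟨u₀, hu'⟩ ⟨a, h⟩ →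
      (G.induce A1).Reachable ⟨u₀, hu₀1⟩ ⟨a, ha1⟩ := by
    intro a ha1 h hr
    obtain ⟨p⟩ := hr
    refine reach_transfer G p (fun v hv => Set.mem_insert_of_mem _ ?_) hu₀1 ha1
    rw [Set.mem_setOf_eq]
    exact ⟨v.2, ⟨p.takeUntil v hv⟩⟩
  have hCw : ∀ (m : ℕ) (zz : ↥A) (p : (G.induce A).Walk zz ⟨u₀, hu₀A⟩), p.length ≤ m →
      ((zz : V) = w₀ ∨ (zz : V) ∉ A1) →
      (G.induce A1).Reachable ⟨w₀, hw₀1⟩ ⟨u₀, hu₀1⟩ := by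
    intro m
    induction m with
    | zero =>
      intro zz p hl hd
      cases p with
      | nil =>
        rcases hd with h' | h'
        · exact absurd h' hu₀w
        · exact absurd hu₀1 h'
      | cons h q => simp [Walk.length_cons] at hl
    | succ m ih =>
      intro zz p hl hd
      cases p with
      | nil =>
        rcases hd with h' | h'
        · exact absurd h' hu₀w
        · exact absurd hu₀1 h'
      | @cons _ sb _ h q =>
        rw [Walk.length_cons, Nat.succ_le_succ_iff] at hl
        by_cases hs1 : (sb : V) ∈ A1
        · by_cases hsw : (sb : V) = w₀
          · exact ih sb q hl (Or.inl hsw)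
          · have hzw : (zz : V) = w₀ := by
              rcases hd with h' | h'
              · exact h'
              · exact absurd (hcr1 sb zz h.symm hs1 zz.2 h') hsw
            have hadj : (G.induce A1).Adj ⟨w₀, hw₀1⟩ ⟨sb, hs1⟩ := by
              have hG : G.Adj (zz : V) (sb : V) := h
              rwa [hzw] at hG
            rcases Set.mem_insert_iff.mp hs1 with h' | ⟨hsb', hrsb⟩
            · exact absurd h' hsw
            · exact hadj.reachable.trans (hreach1 sb hs1 hsb' hrsb).symm
        · exact ih sb q hl (Or.inr hs1)
  have hconn1 : (G.induce A1).Connected := by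
    have hall : ∀ a (ha : a ∈ A1), (G.induce A1).Reachable ⟨a, ha⟩ ⟨u₀, hu₀1⟩ := by
      intro a ha
      rcases Set.mem_insert_iff.mp ha with h' | ⟨h', hr⟩
      · subst h'
        obtain ⟨p⟩ := hconnA.preconnected ⟨w₀, hw₀A⟩ ⟨u₀, hu₀A⟩
        exact hCw p.length ⟨w₀, hw₀A⟩ p le_rfl (Or.inl rfl)
      · exact (hreach1 a ha h' hr).symm
    rw [connected_iff]
    refine ⟨fun a b => ?_, ⟨⟨u₀, hu₀1⟩⟩⟩
    exact (hall a.1 a.2).trans (hall b.1 b.2).symm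
  have hF4 : ∀ (m : ℕ) (zz : ↥A) (p : (G.induce A).Walk zz ⟨u₀, hu₀A⟩), p.length ≤ m →
      ∀ (hz2 : (zz : V) ∈ A2), (zz : V) ∉ A1 →
      (G.induce A2).Reachable ⟨zz, hz2⟩ ⟨w₀, hw₀2⟩ := by
    intro m
    induction m with
    | zero =>
      intro zz p hl hz2 hzn1
      cases p with
      | nil => exact absurd hu₀1 hzn1
      | cons h q => simp [Walk.length_cons] at hl
    | succ m ih =>
      intro zz p hl hz2 hzn1
      cases p with
      | nil => exact absurd hu₀1 hzn1
      | @cons _ sb _ h q =>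
        rw [Walk.length_cons, Nat.succ_le_succ_iff] at hl
        by_cases hsw : (sb : V) = w₀
        · have hadj : (G.induce A2).Adj ⟨zz, hz2⟩ ⟨w₀, hw₀2⟩ := by
            have hG : G.Adj (zz : V) (sb : V) := h
            rwa [hsw] at hG
          exact hadj.reachable
        · by_cases hs1 : (sb : V) ∈ A1
          · exact absurd (hcr1 sb zz h.symm hs1 zz.2 hzn1) hsw
          · have hs2 : (sb : V) ∈ A2 := hA12 sb sb.2 hs1
            have hadj : (G.induce A2).Adj ⟨zz, hz2⟩ ⟨sb, hs2⟩ := h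
            exact hadj.reachable.trans (ih sb q hl hs2 hs1)
  have hconn2 : (G.induce A2).Connected := by
    have hall : ∀ a (ha : a ∈ A2), (G.induce A2).Reachable ⟨a, ha⟩ ⟨w₀, hw₀2⟩ := by
      intro a ha
      rcases Set.mem_insert_iff.mp ha with h' | ⟨haA, han1⟩
      · subst h'
        exact Reachable.refl _
      · obtain ⟨p⟩ := hconnA.preconnected ⟨a, haA⟩ ⟨u₀, hu₀A⟩
        exact hF4 p.length ⟨a, haA⟩ p le_rfl ha han1
    rw [connected_iff]
    refine ⟨fun a b => ?_, ⟨⟨w₀, hw₀2⟩⟩⟩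
    exact (hall a.1 a.2).trans (hall b.1 b.2).symm
  have hfin : A.Finite := Set.toFinite A
  have hc1lt : A1.ncard < n := by
    rw [← hcard]
    exact Set.ncard_lt_ncard
      (HasSubset.Subset.ssubset_of_ne hA1A (fun h => hv₀n1 (by rw [h]; exact hv₀A))) hfin
  have hc2lt : A2.ncard < n := by
    rw [← hcard]
    exact Set.ncard_lt_ncard
      (HasSubset.Subset.ssubset_of_ne hA2A (fun h => hu₀n2 (by rw [h]; exact hu₀A))) hfin
  have h1 := IH _ hc1lt A1 rfl hconn1
  have h2 := IH _ hc2lt A2 rfl hconn2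
  letI : Fintype ↥A1 := Fintype.ofFinite _
  letI : Fintype ↥A2 := Fintype.ofFinite _
  obtain ⟨c1, hc1⟩ := exists_coloring_of_rvd_le _ h1
  obtain ⟨c2₀, hc2₀⟩ := exists_coloring_of_rvd_le _ h2
  set c2 : ↥A2 → Fin k := (Equiv.swap (c2₀ ⟨w₀, hw₀2⟩) (c1 ⟨w₀, hw₀1⟩)) ∘ c2₀ with hc2def
  have hc2 : IsRVDColoring (G.induce A2) c2 := hc2₀.comp (Equiv.injective _)
  have hmatch : c1 ⟨w₀, hw₀1⟩ = c2 ⟨w₀, hw₀2⟩ := by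
    rw [hc2def]
    exact (Equiv.swap_apply_left _ _).symm
  set c : ↥A → Fin k := fun v => if h : (v : V) ∈ A1 then c1 ⟨v, h⟩
    else c2 ⟨v, hA12 v v.2 h⟩ with hcdef
  have hagree1 : ∀ a (h : a ∈ A1), c ⟨a, hA1A h⟩ = c1 ⟨a, h⟩ := fun a h => dif_pos h
  have hcap : ∀ a, a ∈ A1 → a ∈ A2 → a = w₀ := by
    intro a h1 h2
    rcases Set.mem_insert_iff.mp h2 with rfl | ⟨-, hn⟩
    · rfl
    · exact absurd h1 hn
  have hagree2 : ∀ a (h : a ∈ A2), c ⟨a, hA2A h⟩ = c2 ⟨a, h⟩ := by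
    intro a h
    by_cases h1 : a ∈ A1
    · have haw : a = w₀ := hcap a h1 h
      subst haw
      exact (dif_pos h1).trans hmatch
    · exact dif_neg h1
  have hcA : IsRVDColoring (G.induce A) c := by
    rintro ⟨x, hxA⟩ ⟨y, hyA⟩ hne
    have hxyne : x ≠ y := fun h => hne (Subtype.ext h)
    by_cases hx1 : x ∈ A1
    · by_cases hy1 : y ∈ A1
      · exact key_cut G hA1A hw₀1 hcr1 hagree1 hc1 hx1 hy1 hxyne
      · by_cases hxw : x = w₀
        · exact key_cut G hA2A hw₀2 hcr2 hagree2 hc2 (hxw ▸ hw₀2) (hA12 y hyA hy1) hxyne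
        · -- mixed : x ∈ A1 \ {w₀}, y ∉ A1
          refine ⟨{⟨w₀, hw₀A⟩}, ?_, ?_, ?_, ?_, ?_⟩
          · intro hmem
            have hx' : x = w₀ := congrArg Subtype.val (Set.mem_singleton_iff.mp hmem)
            exact hxw hx'
          · intro hmem
            have hy' : y = w₀ := congrArg Subtype.val (Set.mem_singleton_iff.mp hmem)
            exact hy1 (hy' ▸ hw₀1)
          · intro p
            have hcrd : ∀ a b : ↥A,
                ((G.induce A).deleteEdges {s((⟨x, hxA⟩ : ↥A), (⟨y, hyA⟩ : ↥A))}).Adj a b →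
                a ∈ {v : ↥A | (v : V) ∈ A1} → b ∉ {v : ↥A | (v : V) ∈ A1} →
                a = (⟨w₀, hw₀A⟩ : ↥A) := by
              intro a b hab ha hb
              rw [deleteEdges_adj] at hab
              exact Subtype.ext (hcr1 a b hab.1 ha b.2 hb)
            have hwmem := walk_mem_of_cross (P := {v : ↥A | (v : V) ∈ A1}) hcrd p.reverse hy1 hx1
            rw [Walk.support_reverse, List.mem_reverse] at hwmem
            exact ⟨_, hwmem, rfl⟩
          · intro hadj
            exact absurd (hcr1 x y hadj hx1 hyA hy1) hxw
          · intro _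
            intro a ha b hb _
            rw [Set.mem_singleton_iff.mp ha, Set.mem_singleton_iff.mp hb]
    · by_cases hy1 : y ∈ A1
      · by_cases hyw : y = w₀
        · exact key_cut G hA2A hw₀2 hcr2 hagree2 hc2 (hA12 x hxA hx1) (hyw ▸ hw₀2) hxyne
        · -- mixed : x ∉ A1, y ∈ A1 \ {w₀}
          refine ⟨{⟨w₀, hw₀A⟩}, ?_, ?_, ?_, ?_, ?_⟩
          · intro hmem
            have hx' : x = w₀ := congrArg Subtype.val (Set.mem_singleton_iff.mp hmem)
            exact hx1 (hx' ▸ hw₀1)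
          · intro hmem
            have hy' : y = w₀ := congrArg Subtype.val (Set.mem_singleton_iff.mp hmem)
            exact hyw hy'
          · intro p
            have hcrd : ∀ a b : ↥A,
                ((G.induce A).deleteEdges {s((⟨x, hxA⟩ : ↥A), (⟨y, hyA⟩ : ↥A))}).Adj a b →
                a ∈ {v : ↥A | (v : V) ∈ A1} → b ∉ {v : ↥A | (v : V) ∈ A1} →
                a = (⟨w₀, hw₀A⟩ : ↥A) := by
              intro a b hab ha hb
              rw [deleteEdges_adj] at hab
              exact Subtype.ext (hcr1 a b hab.1 ha b.2 hb)
            have hwmem := walk_mem_of_cross (P := {v : ↥A | (v : V) ∈ A1}) hcrd p hx1 hy1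
            exact ⟨_, hwmem, rfl⟩
          · intro hadj
            exact absurd (hcr1 y x hadj.symm hy1 hxA hx1) hyw
          · intro _
            intro a ha b hb _
            rw [Set.mem_singleton_iff.mp ha, Set.mem_singleton_iff.mp hb]
      · exact key_cut G hA2A hw₀2 hcr2 hagree2 hc2 (hA12 x hxA hx1) (hA12 y hyA hy1) hxyne
  exact Nat.sInf_le ⟨c, hcA⟩

/-- If `B` is a block of a nontrivial connected graph `G` whose `rvd` is
maximum among all blocks of `G`, then `rvd(G) = rvd(B)`. -/
theorem rvd_eq_rvd_maxBlock [Fintype V] (G : SimpleGraph V)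
    (hconn : G.Connected) (hnontrivial : 1 < Fintype.card V)
    (B : G.Subgraph) (hB : IsBlock G B)
    (hmax : ∀ B' : G.Subgraph, IsBlock G B' → rvd B'.coe ≤ rvd B.coe) :
    rvd G = rvd B.coe := by
  classical
  letI : Fintype ↥B.verts := Fintype.ofFinite _
  have hBemb : B.coe ↪g G :=
    ⟨⟨Subtype.val, Subtype.val_injective⟩,
      fun {a b} => ⟨fun h => hB.adj_of_adj a.2 b.2 h, fun h => B.adj_sub h⟩⟩
  have hlow : rvd B.coe ≤ rvd G := rvd_le_of_embedding hBemb
  haveI hfinsub : Finite G.Subgraph := by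
    have hinj : Function.Injective
        (fun H : G.Subgraph => (H.verts, {p : V × V | H.Adj p.1 p.2})) := by
      intro H1 H2 h
      have h1 : H1.verts = H2.verts := congrArg Prod.fst h
      have h2 : {p : V × V | H1.Adj p.1 p.2} = {p : V × V | H2.Adj p.1 p.2} :=
        congrArg Prod.snd h
      refine SimpleGraph.Subgraph.ext h1 ?_
      funext a b
      exact propext ⟨fun hh => (Set.ext_iff.mp h2 (a, b)).mp hh,
        fun hh => (Set.ext_iff.mp h2 (a, b)).mpr hh⟩
    exact Finite.of_injective _ hinj
  have Hk : ∀ A : Set V, (G.induce A).Connected → HasNoCutVertex (G.induce A) →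
      rvd (G.induce A) ≤ rvd B.coe := by
    intro A hconnA hnocut
    have hEq : ((⊤ : G.Subgraph).induce A).coe = G.induce A := by
      ext a b
      simp only [Subgraph.coe_adj, Subgraph.induce_adj, Subgraph.top_adj, comap_adj,
        Function.Embedding.coe_subtype]
      exact ⟨fun h => h.2.2, fun h => ⟨a.2, b.2, h⟩⟩
    have hSne : {H' : G.Subgraph | (⊤ : G.Subgraph).induce A ≤ H' ∧ H'.coe.Connected ∧
        HasNoCutVertex H'.coe}.Nonempty :=
      ⟨(⊤ : G.Subgraph).induce A, le_refl _, by rw [hEq]; exact hconnA,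
        by rw [hEq]; exact hnocut⟩
    obtain ⟨B', hB'S, hB'max⟩ := Set.Finite.exists_maximalFor id _ (Set.toFinite _) hSne
    have hblock : IsBlock G B' := by
      refine ⟨hB'S.2.1, hB'S.2.2, ?_⟩
      intro H'' hle hcon hnc
      exact le_antisymm (hB'max ⟨le_trans hB'S.1 hle, hcon, hnc⟩ hle) hle
    have hverts : A ⊆ B'.verts := hB'S.1.1
    letI : Fintype ↥B'.verts := Fintype.ofFinite _
    have hemb : (G.induce A) ↪g B'.coe :=
      ⟨⟨fun a => ⟨a.1, hverts a.2⟩,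
        fun a b h => by
          have h' := congrArg Subtype.val h
          exact Subtype.ext h'⟩,
        fun {a b} => ⟨fun h => B'.adj_sub h,
          fun h => hblock.adj_of_adj (hverts a.2) (hverts b.2) h⟩⟩
    exact le_trans (rvd_le_of_embedding hemb) (hmax B' hblock)
  have hup : rvd G ≤ rvd B.coe := by
    letI : Fintype ↥(Set.univ : Set V) := Fintype.ofFinite _
    have e0 : G ↪g (G.induce (Set.univ : Set V)) :=
      ⟨⟨fun v => ⟨v, trivial⟩, fun a b h => congrArg Subtype.val h⟩,
        fun {a b} => Iff.rfl⟩
    refine le_trans (rvd_le_of_embedding e0) ?_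
    have hconnU : (G.induce (Set.univ : Set V)).Connected := by
      rw [connected_iff]
      refine ⟨fun a b => ?_, ⟨⟨hconn.nonempty.some, trivial⟩⟩⟩
      obtain ⟨p⟩ := hconn.preconnected a.1 b.1
      exact ⟨p.map (⟨fun v => ⟨v, trivial⟩, fun {x y} h => h⟩ : G →g G.induce Set.univ)⟩
    exact rvd_induce_le G (rvd B.coe) Hk (Set.univ : Set V).ncard Set.univ rfl hconnU
  exact le_antisymm hup hlow
end

section
/- For every nontrivial connected graph G, rvd(G) ≤ χ_i(G), where χ_i(G) is the injective chromatic number of G; consequently rvd(G) ≤ Δ(G)(Δ(G)−1) + 1. -/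
open SimpleGraph

variable {V : Type*}

lemma greedy_coloring {V : Type*} [Fintype V] (r : V → V → Prop) (hs : Symmetric r) (d : ℕ)
    (hd : ∀ v, {u | r v u ∧ u ≠ v}.ncard ≤ d) :
    ∃ c : V → Fin (d+1), ∀ u v, r u v → u ≠ v → c u ≠ c v := by
  classical
  have key : ∀ s : Finset V, ∃ c : V → Fin (d+1),
      ∀ u ∈ s, ∀ v ∈ s, r u v → u ≠ v → c u ≠ c v := by
    intro s
    induction s using Finset.induction_on with
    | empty => exact ⟨fun _ => 0, by simp⟩
    | insert a s ha ih =>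
      obtain ⟨c, hc⟩ := ih
      set T : Finset (Fin (d+1)) := (s.filter (fun u => r a u)).image c with hT
      have hTcard : T.card ≤ d := by
        calc T.card ≤ (s.filter (fun u => r a u)).card := Finset.card_image_le
        _ ≤ ({u | r a u ∧ u ≠ a} : Set V).toFinset.card := by
            apply Finset.card_le_card
            intro u hu
            simp only [Finset.mem_filter] at hu
            simp only [Set.mem_toFinset, Set.mem_setOf_eq]
            exact ⟨hu.2, fun h => ha (h ▸ hu.1)⟩
        _ ≤ d := by rw [← Set.ncard_eq_toFinset_card']; exact hd a
      obtain ⟨k, hk⟩ : ∃ k : Fin (d+1), k ∉ T := by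
        by_contra h
        push_neg at h
        have hsub : (Finset.univ : Finset (Fin (d+1))) ⊆ T := fun k _ => h k
        have := Finset.card_le_card hsub
        simp [Finset.card_univ] at this
        omega
      refine ⟨Function.update c a k, ?_⟩
      intro u hu v hv hr hne
      rcases Finset.mem_insert.mp hu with rfl | hu' <;>
        rcases Finset.mem_insert.mp hv with rfl | hv'
      · exact absurd rfl hne
      · have hva : v ≠ u := fun h => ha (h ▸ hv')
        rw [Function.update_self, Function.update_of_ne hva]
        intro h
        exact hk (h ▸ Finset.mem_image_of_mem c (Finset.mem_filter.mpr ⟨hv', hr⟩))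
      · have hua : u ≠ v := fun h => ha (h ▸ hu')
        rw [Function.update_self, Function.update_of_ne hua]
        intro h
        exact hk (h.symm ▸ Finset.mem_image_of_mem c (Finset.mem_filter.mpr ⟨hu', hs hr⟩))
      · have h1 : u ≠ a := fun h => (h ▸ ha) hu'
        have h2 : v ≠ a := fun h => (h ▸ ha) hv'
        rw [Function.update_of_ne h1, Function.update_of_ne h2]
        exact hc u hu' v hv' hr hne
  obtain ⟨c, hc⟩ := key Finset.univ
  exact ⟨c, fun u v hr hne => hc u (Finset.mem_univ u) v (Finset.mem_univ v) hr hne⟩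

lemma inj_to_rvd {α : Type*} (G : SimpleGraph V) (c : V → α)
    (h : IsInjectiveColoring G c) : IsRVDColoring G c := by
  intro x y hxy
  refine ⟨(G.neighborSet x) \ {y}, ?_, ?_, ?_, ?_, ?_⟩
  · rintro ⟨hadj, -⟩; exact G.loopless.irrefl x hadj
  · rintro ⟨-, hy⟩; exact hy rfl
  · intro p
    cases p with
    | nil => exact absurd rfl hxy
    | cons hadj q =>
      rename_i b
      refine ⟨b, ?_, ?_⟩
      · rw [SimpleGraph.Walk.support_cons]
        exact List.mem_cons_of_mem _ q.start_mem_support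
      · rw [SimpleGraph.deleteEdges_adj] at hadj
        refine ⟨hadj.1, ?_⟩
        intro hb
        rw [Set.mem_singleton_iff] at hb
        subst hb
        exact hadj.2 rfl
  · intro hadjxy
    right
    have hsub : ∀ u ∈ insert y ((G.neighborSet x) \ {y}), G.Adj u x := by
      rintro u (rfl | ⟨hu, -⟩)
      · exact hadjxy.symm
      · exact hu.symm
    intro u hu v hv heq
    by_contra hne
    exact h u v x (hsub u hu) (hsub v hv) hne heq
  · intro _
    intro u hu v hv heq
    by_contra hne
    exact h u v x hu.1.symm hv.1.symm hne heq

/-- For every nontrivial connected graph `G`, `rvd(G) ≤ χᵢ(G)`, and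
consequently `rvd(G) ≤ Δ(G)(Δ(G) - 1) + 1`. -/
theorem rvd_le_injChromaticNumber [Fintype V] (G : SimpleGraph V) [DecidableRel G.Adj]
    (hconn : G.Connected) (hnontrivial : 1 < Fintype.card V) :
    rvd G ≤ injChromaticNumber G ∧
    rvd G ≤ G.maxDegree * (G.maxDegree - 1) + 1 := by
  classical
  constructor
  · -- rvd ≤ χᵢ
    have hne : {n | ∃ c : V → Fin n, IsInjectiveColoring G c}.Nonempty := by
      refine ⟨Fintype.card V, fun v => (Fintype.equivFin V) v, ?_⟩
      intro u v w _ _ hne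
      exact fun h => hne ((Fintype.equivFin V).injective h)
    obtain ⟨c, hc⟩ := Nat.sInf_mem hne
    exact Nat.sInf_le ⟨c, inj_to_rvd G c hc⟩
  · -- rvd ≤ Δ(Δ-1)+1
    set D := G.maxDegree with hD
    have hd : ∀ v : V, ({u | (∃ w, G.Adj v w ∧ G.Adj u w) ∧ u ≠ v} : Set V).ncard
        ≤ D * (D - 1) := by
      intro v
      have hsub : ({u | (∃ w, G.Adj v w ∧ G.Adj u w) ∧ u ≠ v} : Set V) ⊆
          ↑((G.neighborFinset v).biUnion fun w => (G.neighborFinset w).erase v) := by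
        rintro u ⟨⟨w, hvw, huw⟩, hne⟩
        simp only [Finset.coe_biUnion, Set.mem_iUnion, Finset.mem_coe,
          Finset.mem_erase, SimpleGraph.mem_neighborFinset]
        exact ⟨w, hvw, hne, huw.symm⟩
      calc ({u | (∃ w, G.Adj v w ∧ G.Adj u w) ∧ u ≠ v} : Set V).ncard
          ≤ (↑((G.neighborFinset v).biUnion fun w => (G.neighborFinset w).erase v) : Set V).ncard :=
            Set.ncard_le_ncard hsub (Set.toFinite _)
        _ = ((G.neighborFinset v).biUnion fun w => (G.neighborFinset w).erase v).card :=
            Set.ncard_coe_finset _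
        _ ≤ ∑ w ∈ G.neighborFinset v, ((G.neighborFinset w).erase v).card :=
            Finset.card_biUnion_le
        _ ≤ ∑ _w ∈ G.neighborFinset v, (D - 1) := by
            apply Finset.sum_le_sum
            intro w hw
            rw [SimpleGraph.mem_neighborFinset] at hw
            rw [Finset.card_erase_of_mem (by rwa [SimpleGraph.mem_neighborFinset, adj_comm])]
            exact Nat.sub_le_sub_right (G.degree_le_maxDegree w) 1
        _ = G.degree v * (D - 1) := by
            rw [Finset.sum_const, smul_eq_mul, SimpleGraph.card_neighborFinset_eq_degree]
        _ ≤ D * (D - 1) := Nat.mul_le_mul_right _ (G.degree_le_maxDegree v)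
    obtain ⟨c, hc⟩ := greedy_coloring (fun u v => ∃ w, G.Adj u w ∧ G.Adj v w)
      (fun u v ⟨w, h1, h2⟩ => ⟨w, h2, h1⟩) (D * (D - 1)) hd
    have hinj : IsInjectiveColoring G c := fun u v w h1 h2 hne => hc u v ⟨w, h1, h2⟩ hne
    exact Nat.sInf_le ⟨c, inj_to_rvd G c hinj⟩
end

section
/- Let G = (V, E) be a graph with no isolated vertices and at least one edge, and let k be a positive integer. Construct the bipartite graph G̃ as follows: for each edge uv ∈ E introduce four new vertices s_{uv}, s'_{uv}, t_{uv}, t'_{uv}, let V_s = {s_{uv}, s'_{uv} : uv ∈ E} and V_t = {t_{uv}, t'_{uv} : uv ∈ E}, set V(G̃) = V ∪ V_s ∪ V_t, and let E(G̃) consist of the edges us_{uv}, us'_{uv}, vs_{uv}, vs'_{uv} for each uv ∈ E together with all edges between V_s and V_t. If the chromatic number satisfies χ(G) ≤ k, then rvd(G̃) ≤ k + 2|E|. -/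
open SimpleGraph

variable {V : Type*}

/-- For `G` with no isolated vertices and at least one edge, if
`χ(G) ≤ k` then `rvd(G̃) ≤ k + 2|E|`, where `G̃` is the bipartite reduction graph. -/
theorem rvd_tildeBip_le_of_colorable [Fintype V] [DecidableEq V] (G : SimpleGraph V)
    [DecidableRel G.Adj]
    (hiso : ∀ v : V, ∃ u : V, G.Adj v u) (hE : G.edgeSet.Nonempty)
    (k : ℕ) (hk : 0 < k) (hχ : G.Colorable k) :
    rvd (tildeBip G) ≤ k + 2 * G.edgeFinset.card := by
  classical
  obtain ⟨C⟩ := hχ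
  have hcard : Fintype.card (↥G.edgeSet × Fin 2) = 2 * G.edgeFinset.card := by
    simp [Fintype.card_prod, ← SimpleGraph.edgeFinset_card]
    have h : Finset.filter (Membership.mem G.edgeSet) Finset.univ = G.edgeFinset := by
      ext e; simp
    simp [h, mul_comm]
  let ι : (↥G.edgeSet × Fin 2) ≃ Fin (2 * G.edgeFinset.card) :=
    (Fintype.equivFin _).trans (finCongr hcard)
  set W := V ⊕ ((↥G.edgeSet × Fin 2) ⊕ (↥G.edgeSet × Fin 2)) with hW
  let c : W → Fin (k + 2 * G.edgeFinset.card) := fun z =>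
    match z with
    | Sum.inl a => Fin.castAdd _ (C a)
    | Sum.inr (Sum.inl p) => Fin.natAdd k (ι p)
    | Sum.inr (Sum.inr p) => Fin.natAdd k (ι p)
  -- color facts
  have hcross : ∀ (a : V) (w : (↥G.edgeSet × Fin 2) ⊕ (↥G.edgeSet × Fin 2)),
      c (Sum.inl a) ≠ c (Sum.inr w) := by
    intro a w h
    have h' := congrArg Fin.val h
    have hva : (c (Sum.inl a)).val = (C a).val := by cases w <;> rfl
    have hk' : (C a).val < k := (C a).isLt
    cases w with
    | inl p =>
      have : (c (Sum.inr (Sum.inl p))).val = k + (ι p).val := rfl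
      omega
    | inr p =>
      have : (c (Sum.inr (Sum.inr p))).val = k + (ι p).val := rfl
      omega
  have hnatinj : ∀ p q : ↥G.edgeSet × Fin 2,
      (k + (ι p).val = k + (ι q).val) → p = q := by
    intro p q h
    have : (ι p) = (ι q) := by
      apply Fin.ext; omega
    exact ι.injective this
  have hLinj : ∀ a b : V, c (Sum.inl a) = c (Sum.inl b) → C a = C b := by
    intro a b h
    have h' := congrArg Fin.val h
    exact Fin.ext h'
  -- adjacency from membership in an edge
  have adj_of_mem : ∀ (e : ↥G.edgeSet) {a b : V}, a ∈ (e : Sym2 V) → b ∈ (e : Sym2 V) →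
      a ≠ b → G.Adj a b := by
    rintro ⟨e, he⟩ a b ha hb hab
    induction e with
    | _ u v =>
      rw [SimpleGraph.mem_edgeSet] at he
      simp only [Sym2.mem_iff] at ha hb
      rcases ha with rfl | rfl <;> rcases hb with rfl | rfl
      · exact absurd rfl hab
      · exact he
      · exact he.symm
      · exact absurd rfl hab
  -- adjacency inversion lemmas
  have hAdjL : ∀ (a : V) (z : W), (tildeBip G).Adj (Sum.inl a) z →
      ∃ (e : ↥G.edgeSet) (i : Fin 2), z = Sum.inr (Sum.inl (e, i)) ∧ a ∈ (e : Sym2 V) := by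
    intro a z h
    rw [tildeBip, SimpleGraph.fromRel_adj] at h
    obtain ⟨hne, h | h⟩ := h
    · rcases h with ⟨a', e, i, h1, h2, h3⟩ | ⟨p, q, h1, h2⟩
      · cases h1; exact ⟨e, i, h2, h3⟩
      · exact absurd h1 (by simp)
    · rcases h with ⟨a', e, i, h1, h2, h3⟩ | ⟨p, q, h1, h2⟩
      · exact absurd h2 (by simp)
      · exact absurd h2 (by simp)
  have hAdjS : ∀ (p : ↥G.edgeSet × Fin 2) (z : W), (tildeBip G).Adj (Sum.inr (Sum.inl p)) z →
      (∃ b : V, z = Sum.inl b ∧ b ∈ (p.1 : Sym2 V)) ∨ (∃ q, z = Sum.inr (Sum.inr q)) := by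
    intro p z h
    rw [tildeBip, SimpleGraph.fromRel_adj] at h
    obtain ⟨hne, h | h⟩ := h
    · rcases h with ⟨a', e, i, h1, h2, h3⟩ | ⟨p', q, h1, h2⟩
      · exact absurd h1 (by simp)
      · exact Or.inr ⟨q, h2⟩
    · rcases h with ⟨a', e, i, h1, h2, h3⟩ | ⟨p', q, h1, h2⟩
      · refine Or.inl ⟨a', h1, ?_⟩
        have : p = (e, i) := by simpa using h2
        rw [this]; exact h3
      · exact absurd h2 (by simp)
  have hAdjT : ∀ (p : ↥G.edgeSet × Fin 2) (z : W), (tildeBip G).Adj (Sum.inr (Sum.inr p)) z →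
      ∃ q, z = Sum.inr (Sum.inl q) := by
    intro p z h
    rw [tildeBip, SimpleGraph.fromRel_adj] at h
    obtain ⟨hne, h | h⟩ := h
    · rcases h with ⟨a', e, i, h1, h2, h3⟩ | ⟨p', q, h1, h2⟩
      · exact absurd h1 (by simp)
      · exact absurd h1 (by simp)
    · rcases h with ⟨a', e, i, h1, h2, h3⟩ | ⟨p', q, h1, h2⟩
      · exact absurd h2 (by simp)
      · exact ⟨p', h1⟩
  -- InjOn lemmas
  have hInjS : Set.InjOn c {z : W | ∃ q, z = Sum.inr (Sum.inl q)} := by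
    rintro z1 ⟨q1, rfl⟩ z2 ⟨q2, rfl⟩ hcc
    have := hnatinj q1 q2 (congrArg Fin.val hcc)
    rw [this]
  have hInjA : ∀ p : ↥G.edgeSet × Fin 2, Set.InjOn c
      {z : W | (∃ b : V, z = Sum.inl b ∧ b ∈ (p.1 : Sym2 V)) ∨
        ∃ q, z = Sum.inr (Sum.inr q)} := by
    intro p z1 hz1 z2 hz2 hcc
    rcases hz1 with ⟨b1, rfl, hb1⟩ | ⟨q1, rfl⟩ <;>
      rcases hz2 with ⟨b2, rfl, hb2⟩ | ⟨q2, rfl⟩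
    · by_contra hne
      have hne' : b1 ≠ b2 := fun h => hne (by rw [h])
      exact C.valid (adj_of_mem p.1 hb1 hb2 hne') (hLinj b1 b2 hcc)
    · exact absurd hcc (hcross b1 (Sum.inr q2))
    · exact absurd hcc.symm (hcross b2 (Sum.inr q1))
    · have := hnatinj q1 q2 (congrArg Fin.val hcc)
      rw [this]
  have hInjL : ∀ a : V, Set.InjOn c
      (insert (Sum.inl a) {z : W | ∃ q, z = Sum.inr (Sum.inl q)}) := by
    intro a z1 hz1 z2 hz2 hcc
    rcases hz1 with rfl | ⟨q1, rfl⟩ <;> rcases hz2 with rfl | ⟨q2, rfl⟩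
    · rfl
    · exact absurd hcc (hcross a (Sum.inl q2))
    · exact absurd hcc.symm (hcross a (Sum.inl q1))
    · have := hnatinj q1 q2 (congrArg Fin.val hcc)
      rw [this]
  -- main RVD coloring
  have hc : IsRVDColoring (tildeBip G) c := by
    intro x y hxy
    refine ⟨{z : W | (tildeBip G).Adj x z ∧ z ≠ y}, ?_, ?_, ?_, ?_, ?_⟩
    · exact fun h => (tildeBip G).loopless.irrefl x h.1
    · exact fun h => h.2 rfl
    · intro p
      cases p with
      | nil => exact absurd rfl hxy
      | @cons _ w _ h q =>
        rw [SimpleGraph.deleteEdges_adj] at h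
        refine ⟨w, by simp, h.1, fun hwy => h.2 ?_⟩
        rw [hwy]; simp
    · intro hadj
      cases x with
      | inl a =>
        refine Or.inl ((hInjL a).mono ?_)
        intro z hz
        rcases hz with rfl | ⟨hz, _⟩
        · exact Set.mem_insert _ _
        · obtain ⟨e, i, rfl, _⟩ := hAdjL a z hz
          exact Set.mem_insert_of_mem _ ⟨(e, i), rfl⟩
      | inr w =>
        cases w with
        | inl p =>
          refine Or.inr ((hInjA p).mono ?_)
          intro z hz
          rcases hz with rfl | ⟨hz, _⟩
          · exact hAdjS p z hadj
          · exact hAdjS p z hz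
        | inr p =>
          refine Or.inr (hInjS.mono ?_)
          intro z hz
          rcases hz with rfl | ⟨hz, _⟩
          · exact hAdjT p z hadj
          · exact hAdjT p z hz
    · intro _
      cases x with
      | inl a =>
        refine hInjS.mono ?_
        rintro z ⟨hz, _⟩
        obtain ⟨e, i, rfl, _⟩ := hAdjL a z hz
        exact ⟨(e, i), rfl⟩
      | inr w =>
        cases w with
        | inl p =>
          refine (hInjA p).mono ?_
          rintro z ⟨hz, _⟩
          exact hAdjS p z hz
        | inr p =>
          refine hInjS.mono ?_
          rintro z ⟨hz, _⟩
          exact hAdjT p z hz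
  exact Nat.sInf_le ⟨c, hc⟩
end

section
/- Let G = (V, E) be a graph with no isolated vertices and at least one edge, and let k be a positive integer. Construct the bipartite graph G̃ as follows: for each edge uv ∈ E introduce four new vertices s_{uv}, s'_{uv}, t_{uv}, t'_{uv}, let V_s = {s_{uv}, s'_{uv} : uv ∈ E} and V_t = {t_{uv}, t'_{uv} : uv ∈ E}, set V(G̃) = V ∪ V_s ∪ V_t, and let E(G̃) consist of the edges us_{uv}, us'_{uv}, vs_{uv}, vs'_{uv} for each uv ∈ E together with all edges between V_s and V_t. If rvd(G̃) ≤ k + 2|E|, then the chromatic number satisfies χ(G) ≤ k. -/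
open SimpleGraph

variable {V : Type*}

lemma isRVDColoring_of_injective {W : Type*} {α : Type*} (G' : SimpleGraph W) (c : W → α)
    (hc : Function.Injective c) : IsRVDColoring G' c := by
  intro x y hxy
  refine ⟨{x, y}ᶜ, by simp, by simp, ?_, fun _ => Or.inl hc.injOn,
    fun _ => hc.injOn⟩
  intro p
  cases p with
  | nil => exact absurd rfl hxy
  | @cons _ w _ h q =>
    rw [SimpleGraph.deleteEdges_adj] at h
    have hwx : w ≠ x := h.1.ne'
    have hwy : w ≠ y := by
      rintro rfl
      exact h.2 (Set.mem_singleton _)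
    refine ⟨w, ?_, ?_⟩
    · simp [SimpleGraph.Walk.support_cons]
    · simp [hwx, hwy]

lemma tildeBip_key [Fintype V] [DecidableEq V] (G : SimpleGraph V) [DecidableRel G.Adj]
    {n : ℕ} (c : (V ⊕ ((↥G.edgeSet × Fin 2) ⊕ (↥G.edgeSet × Fin 2))) → Fin n)
    (hc : IsRVDColoring (tildeBip G) c) {u v : V} (huv : G.Adj u v) :
    ∃ S : Set (V ⊕ ((↥G.edgeSet × Fin 2) ⊕ (↥G.edgeSet × Fin 2))),
      Set.InjOn c S ∧ Sum.inl u ∈ S ∧ Sum.inl v ∈ S ∧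
      ∀ q : ↥G.edgeSet × Fin 2, Sum.inr (Sum.inr q) ∈ S := by
  set e : ↥G.edgeSet := ⟨s(u, v), huv⟩ with he
  set x : V ⊕ ((↥G.edgeSet × Fin 2) ⊕ (↥G.edgeSet × Fin 2)) := Sum.inr (Sum.inl (e, 0)) with hx
  set y : V ⊕ ((↥G.edgeSet × Fin 2) ⊕ (↥G.edgeSet × Fin 2)) := Sum.inr (Sum.inl (e, 1)) with hy
  have hxy : x ≠ y := by simp [hx, hy]
  obtain ⟨S, hxS, hyS, hcut, _, hna⟩ := hc x y hxy
  have hnadj : ¬ (tildeBip G).Adj x y := by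
    simp [tildeBip, SimpleGraph.fromRel_adj, hx, hy]
  have hmemS : ∀ w, (tildeBip G).Adj x w → (tildeBip G).Adj w y → w ∈ S := by
    intro w h1 h2
    have e1 : ((tildeBip G).deleteEdges {s(x, y)}).Adj x w := by
      rw [SimpleGraph.deleteEdges_adj]
      refine ⟨h1, ?_⟩
      intro hm
      rw [Set.mem_singleton_iff, Sym2.eq_iff] at hm
      rcases hm with ⟨-, h⟩ | ⟨h, -⟩
      · exact h2.ne h
      · exact hxy h
    have e2 : ((tildeBip G).deleteEdges {s(x, y)}).Adj w y := by
      rw [SimpleGraph.deleteEdges_adj]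
      refine ⟨h2, ?_⟩
      intro hm
      rw [Set.mem_singleton_iff, Sym2.eq_iff] at hm
      rcases hm with ⟨h, -⟩ | ⟨-, h⟩
      · exact h1.ne' h
      · exact hxy h.symm
    obtain ⟨z, hz, hzS⟩ :=
      hcut (SimpleGraph.Walk.cons e1 (SimpleGraph.Walk.cons e2 SimpleGraph.Walk.nil))
    simp only [SimpleGraph.Walk.support_cons, SimpleGraph.Walk.support_nil,
      List.mem_cons, List.not_mem_nil, or_false, List.mem_singleton] at hz
    rcases hz with rfl | rfl | rfl
    · exact absurd hzS hxS
    · exact hzS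
    · exact absurd hzS hyS
  have hadjxl : ∀ a : V, a ∈ (e : Sym2 V) → (tildeBip G).Adj x (Sum.inl a) := by
    intro a ha
    rw [tildeBip, SimpleGraph.fromRel_adj]
    exact ⟨by simp [hx], Or.inr (Or.inl ⟨a, e, 0, rfl, rfl, ha⟩)⟩
  have hadjly : ∀ a : V, a ∈ (e : Sym2 V) → (tildeBip G).Adj (Sum.inl a) y := by
    intro a ha
    rw [tildeBip, SimpleGraph.fromRel_adj]
    exact ⟨by simp [hy], Or.inl (Or.inl ⟨a, e, 1, rfl, rfl, ha⟩)⟩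
  have hu : u ∈ (e : Sym2 V) := by rw [he]; exact Sym2.mem_mk_left u v
  have hv : v ∈ (e : Sym2 V) := by rw [he]; exact Sym2.mem_mk_right u v
  refine ⟨S, hna hnadj, hmemS _ (hadjxl u hu) (hadjly u hu),
    hmemS _ (hadjxl v hv) (hadjly v hv), fun q => ?_⟩
  refine hmemS _ ?_ ?_
  · rw [tildeBip, SimpleGraph.fromRel_adj]
    exact ⟨by simp [hx], Or.inl (Or.inr ⟨(e, 0), q, rfl, rfl⟩)⟩
  · rw [tildeBip, SimpleGraph.fromRel_adj]
    exact ⟨by simp [hy], Or.inr (Or.inr ⟨(e, 1), q, rfl, rfl⟩)⟩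

/-- For `G` with no isolated vertices and at least one edge, if
`rvd(G̃) ≤ k + 2|E|` then `χ(G) ≤ k`, where `G̃` is the bipartite reduction graph. -/
theorem colorable_of_rvd_tildeBip_le [Fintype V] [DecidableEq V] (G : SimpleGraph V)
    [DecidableRel G.Adj]
    (hiso : ∀ v : V, ∃ u : V, G.Adj v u) (hE : G.edgeSet.Nonempty)
    (k : ℕ) (hk : 0 < k) (hrvd : rvd (tildeBip G) ≤ k + 2 * G.edgeFinset.card) :
    G.Colorable k := by
  classical
  have hne : {m | ∃ c : (V ⊕ ((↥G.edgeSet × Fin 2) ⊕ (↥G.edgeSet × Fin 2))) → Fin m,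
      IsRVDColoring (tildeBip G) c}.Nonempty :=
    ⟨_, (Fintype.equivFin _ : _ ≃ Fin _), isRVDColoring_of_injective _ _ (Fintype.equivFin _).injective⟩
  obtain ⟨c, hc⟩ : ∃ c : (V ⊕ ((↥G.edgeSet × Fin 2) ⊕ (↥G.edgeSet × Fin 2))) →
      Fin (rvd (tildeBip G)), IsRVDColoring (tildeBip G) c := Nat.sInf_mem hne
  set T : Finset (Fin (rvd (tildeBip G))) :=
    Finset.image (fun q : ↥G.edgeSet × Fin 2 => c (Sum.inr (Sum.inr q))) Finset.univ with hT
  have hex : ∃ a b : V, G.Adj a b := by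
    obtain ⟨e0, he0⟩ := hE
    induction e0 using Sym2.ind with
    | _ a b => exact ⟨a, b, he0⟩
  obtain ⟨u0, v0, h0⟩ := hex
  obtain ⟨S0, hinj0, -, -, hq0⟩ := tildeBip_key G c hc h0
  have hTcard : T.card = 2 * G.edgeFinset.card := by
    rw [hT, Finset.card_image_of_injOn, Finset.card_univ]
    · rw [Fintype.card_prod, Fintype.card_fin, SimpleGraph.edgeFinset_card]
      ring
    · intro q1 _ q2 _ hq
      have := hinj0 (hq0 q1) (hq0 q2) hq
      simpa using this
  have hnotinT : ∀ a : V, c (Sum.inl a) ∉ T := by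
    intro a haT
    obtain ⟨b, hb⟩ := hiso a
    obtain ⟨S, hinj, haS, -, hq⟩ := tildeBip_key G c hc hb
    rw [hT, Finset.mem_image] at haT
    obtain ⟨q, -, hqe⟩ := haT
    have := hinj (hq q) haS hqe
    simp at this
  have hproper : ∀ a b : V, G.Adj a b → c (Sum.inl a) ≠ c (Sum.inl b) := by
    intro a b hab hcc
    obtain ⟨S, hinj, haS, hbS, -⟩ := tildeBip_key G c hc hab
    have := hinj haS hbS hcc
    exact hab.ne (Sum.inl_injective this)
  have hcardF : (Tᶜ : Finset (Fin (rvd (tildeBip G)))).card ≤ k := by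
    rw [Finset.card_compl, hTcard, Fintype.card_fin]
    omega
  let C : G.Coloring ↥(Tᶜ : Finset (Fin (rvd (tildeBip G)))) :=
    SimpleGraph.Coloring.mk (fun a => ⟨c (Sum.inl a), by simpa using hnotinT a⟩)
      (fun {a b} hab h => hproper a b hab (congrArg Subtype.val h))
  have hcol := C.colorable
  rw [Fintype.card_coe] at hcol
  exact hcol.mono hcardF
end
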